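/- arXiv:2512.08151 — 3 statements merged into one kernel-verified Lean document; each statement's English description precedes it below -/
import Mathlib

section
/- Let μ be a non-degenerate aperiodic probability measure on Γ. Then for each δ > 0 there exist constants c_δ, C_δ > 0 such that for all n ∈ ℕ, all x ∈ Δ, and all v = (v_1,…,v_m) ∈ ℝ^m with v_i ∈ [−1/2, 1/2) for every i and max_i |v_i| ≥ δ, one has |(ℒ_v^n 1_x)(id)| ≤ C_δ·exp(−c_δ·n). -/
open scoped BigOperators Classical
open Filter Matrix MeasureTheory

namespace NSVA

noncomputable section

/-- Convolution of two real-valued functions on a group. -/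
def conv {G : Type*} [Group G] (μ ν : G → ℝ) : G → ℝ :=
  fun g => ∑' h : G, μ h * ν (h⁻¹ * g)

/-- Convolution powers: `convPow μ 0 = δ_1`, `convPow μ (n+1) = (convPow μ n) * μ`. -/
def convPow {G : Type*} [Group G] (μ : G → ℝ) : ℕ → G → ℝ
  | 0 => fun g => if g = 1 then 1 else 0
  | n + 1 => conv (convPow μ n) μ

/-- A probability measure on a countable set, viewed as a function. -/
def IsProb {G : Type*} (μ : G → ℝ) : Prop := (∀ g, 0 ≤ μ g) ∧ HasSum μ 1

/-- The support of `μ` generates the group as a semigroup. -/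
def Nondeg {G : Type*} [Group G] (μ : G → ℝ) : Prop :=
  ∀ g : G, g ∈ Subsemigroup.closure {x : G | 0 < μ x}

/-- `μ` is aperiodic: `μ_n(1) > 0` for all large enough `n`. -/
def Aperiodic {G : Type*} [Group G] (μ : G → ℝ) : Prop :=
  ∃ N : ℕ, ∀ n : ℕ, N ≤ n → 0 < convPow μ n 1

/-- Total variation distance between two (probability) functions. -/
def tv {Z : Type*} (p q : Z → ℝ) : ℝ := (1 / 2) * ∑' z : Z, |p z - q z|

/-- Word length with respect to a finite set `S₀`. -/
def wordLength {G : Type*} [Group G] (S₀ : Finset G) (g : G) : ℕ :=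
  sInf {n : ℕ | ∃ l : List G, (∀ s ∈ l, s ∈ S₀) ∧ l.length = n ∧ l.prod = g}

/-- Finite second moment with respect to a word metric given by a finite symmetric
generating set. -/
def FinSecondMoment {G : Type*} [Group G] (μ : G → ℝ) : Prop :=
  ∃ S₀ : Finset G, (∀ s ∈ S₀, s⁻¹ ∈ S₀) ∧ Subgroup.closure (S₀ : Set G) = ⊤ ∧
    Summable (fun g : G => (wordLength S₀ g : ℝ) ^ 2 * μ g)

/-- A group is virtually abelian if it has an abelian subgroup of finite index. -/
def VirtAbelian (G : Type*) [Group G] : Prop :=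
  ∃ A : Subgroup G, A.index ≠ 0 ∧ ∀ a b : A, a * b = b * a

/-- The noised measure `π^ρ` on `G × G`. -/
def noised {G : Type*} (μ : G → ℝ) (ρ : ℝ) : G × G → ℝ :=
  fun p => ρ * μ p.1 * μ p.2 + (1 - ρ) * μ p.1 * (if p.1 = p.2 then 1 else 0)

/-- First marginal of a measure on a product. -/
def marg1 {G₁ G₂ : Type*} (ν : G₁ × G₂ → ℝ) : G₁ → ℝ := fun γ₁ => ∑' γ₂ : G₂, ν (γ₁, γ₂)

/-- Second marginal of a measure on a product. -/
def marg2 {G₁ G₂ : Type*} (ν : G₁ × G₂ → ℝ) : G₂ → ℝ := fun γ₂ => ∑' γ₁ : G₁, ν (γ₁, γ₂)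

/-- A system of representatives of the right cosets `Λ\Γ` containing the identity,
together with the representative map `rep`, constant on right cosets. -/
structure RepSystem {Γ : Type*} [Group Γ] (Λ : Subgroup Γ) where
  Δ : Finset Γ
  one_mem : (1 : Γ) ∈ Δ
  rep : Γ → Γ
  rep_mem : ∀ γ : Γ, rep γ ∈ Δ
  rep_spec : ∀ γ : Γ, γ * (rep γ)⁻¹ ∈ Λ
  rep_idem : ∀ x ∈ Δ, rep x = x
  rep_coset : ∀ γ : Γ, ∀ v ∈ Λ, rep (v * γ) = rep γ

variable {Γ : Type*} [Group Γ] {Λ : Subgroup Γ} {m : ℕ}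

/-- The cocycle `α(x,s) = ψ(x·s·(x^s)⁻¹) ∈ ℤ^m`. -/
def cocycle (ψ : Λ ≃* Multiplicative (Fin m → ℤ)) (R : RepSystem Λ) (x s : Γ) : Fin m → ℤ :=
  Multiplicative.toAdd (ψ ⟨x * s * (R.rep (x * s))⁻¹, R.rep_spec (x * s)⟩)

/-- The transfer homomorphism `θ(γ) = ∑_{x∈Δ} α(x,γ)`. -/
def transfer (ψ : Λ ≃* Multiplicative (Fin m → ℤ)) (R : RepSystem Λ) (γ : Γ) : Fin m → ℤ :=
  ∑ x ∈ R.Δ, cocycle ψ R x γ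

/-- `Φ(γ) = ψ(v)` where `γ = v·x`, `v ∈ Λ`, `x ∈ Δ`. -/
def Phi (ψ : Λ ≃* Multiplicative (Fin m → ℤ)) (R : RepSystem Λ) (γ : Γ) : Fin m → ℤ :=
  Multiplicative.toAdd (ψ ⟨γ * (R.rep γ)⁻¹, R.rep_spec γ⟩)

/-- A 1-form on the quotient diagram. -/
def IsOneForm (R : RepSystem Λ) (ω : Γ → Γ → ℝ) : Prop :=
  ∀ x ∈ R.Δ, ∀ s : Γ, ω (R.rep (x * s)) s⁻¹ = -ω x s

/-- `χ(ω) = ∑_{x∈Δ} ∑_s c(x,s)·ω(x,s)` where `c(x,s) = μ(s)/#F`. -/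
def chi (R : RepSystem Λ) (μ : Γ → ℝ) (ω : Γ → Γ → ℝ) : ℝ :=
  ∑ x ∈ R.Δ, ∑' s : Γ, μ s / (Λ.index : ℝ) * ω x s

/-- Square-integrability of a 1-form. -/
def SqInt (R : RepSystem Λ) (μ : Γ → ℝ) (ω : Γ → Γ → ℝ) : Prop :=
  ∀ x ∈ R.Δ, Summable (fun s : Γ => μ s / (Λ.index : ℝ) * ω x s ^ 2)

/-- Harmonicity of a (square-integrable) 1-form. -/
def Harmonic (R : RepSystem Λ) (μ : Γ → ℝ) (ω : Γ → Γ → ℝ) : Prop :=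
  SqInt R μ ω ∧ ∀ x ∈ R.Δ, (∑' s : Γ, μ s * ω x s) = chi R μ ω

/-- The differential `df(x,s) = f(x^s) − f(x)`. -/
def dd (R : RepSystem Λ) (f : Γ → ℝ) : Γ → Γ → ℝ := fun x s => f (R.rep (x * s)) - f x

/-- `(u, f)` is a harmonic decomposition of the 1-form `ω`: `ω = u + df` with `u`
a harmonic 1-form. -/
def IsHarmDecomp (R : RepSystem Λ) (μ : Γ → ℝ) (ω u : Γ → Γ → ℝ) (f : Γ → ℝ) : Prop :=
  IsOneForm R u ∧ Harmonic R μ u ∧ ∀ x ∈ R.Δ, ∀ s : Γ, ω x s = u x s + dd R f x s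

/-- The 1-form `v̂(x,s) = ⟨v, α(x,s)⟩` (standard inner product). -/
def vhat (ψ : Λ ≃* Multiplicative (Fin m → ℤ)) (R : RepSystem Λ) (v : Fin m → ℝ) :
    Γ → Γ → ℝ :=
  fun x s => ∑ i, v i * (cocycle ψ R x s i : ℝ)

/-- The 1-form `v̂(x,s) = B(v, α(x,s))` for a bilinear form `B`. -/
def vhatB (ψ : Λ ≃* Multiplicative (Fin m → ℤ)) (R : RepSystem Λ)
    (B : (Fin m → ℝ) →ₗ[ℝ] (Fin m → ℝ) →ₗ[ℝ] ℝ) (v : Fin m → ℝ) : Γ → Γ → ℝ :=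
  fun x s => B v (fun i => (cocycle ψ R x s i : ℝ))

/-- The drift `ζ = (1/#F)·∑_{x∈Δ}∑_s μ(s)·α(x,s) ∈ ℝ^m`. -/
def drift (ψ : Λ ≃* Multiplicative (Fin m → ℤ)) (R : RepSystem Λ) (μ : Γ → ℝ) : Fin m → ℝ :=
  fun i => (Λ.index : ℝ)⁻¹ * ∑ x ∈ R.Δ, ∑' s : Γ, μ s * (cocycle ψ R x s i : ℝ)

/-- The covariance pairing `∑_{x,s} c(x,s)·u(x,s)·u'(x,s) − χ(u)·χ(u')`. -/
def cov (R : RepSystem Λ) (μ : Γ → ℝ) (u u' : Γ → Γ → ℝ) : ℝ :=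
  (∑ x ∈ R.Δ, ∑' s : Γ, μ s / (Λ.index : ℝ) * (u x s * u' x s)) - chi R μ u * chi R μ u'

/-- The transfer operator `ℒ_v` acting on functions `Δ → ℂ`. -/
def transferOp (ψ : Λ ≃* Multiplicative (Fin m → ℤ)) (R : RepSystem Λ) (μ : Γ → ℝ)
    (v : Fin m → ℝ) (f : Γ → ℂ) : Γ → ℂ :=
  fun x => ∑' s : Γ, (μ s : ℂ) *
    Complex.exp (2 * Real.pi * Complex.I * ((∑ i, v i * (cocycle ψ R x s i : ℝ)) : ℝ)) *
    f (R.rep (x * s))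

/-- The Gaussian density `ξ_A(w)` associated with a (positive-definite) matrix `A`. -/
def gauss {d : ℕ} (A : Matrix (Fin d) (Fin d) ℝ) (w : Fin d → ℝ) : ℝ :=
  (2 * Real.pi) ^ (-(d : ℝ) / 2) * A.det ^ (-(1 : ℝ) / 2) *
    Real.exp (-(w ⬝ᵥ A⁻¹.mulVec w) / 2)

/-- The product representative system for `Λ₁ × Λ₂ ≤ Γ₁ × Γ₂`. -/
def prodRep {Γ₁ : Type*} [Group Γ₁] {Γ₂ : Type*} [Group Γ₂]
    {Λ₁ : Subgroup Γ₁} {Λ₂ : Subgroup Γ₂}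
    (R₁ : RepSystem Λ₁) (R₂ : RepSystem Λ₂) : RepSystem (Λ₁.prod Λ₂) where
  Δ := R₁.Δ ×ˢ R₂.Δ
  one_mem := Finset.mem_product.mpr ⟨R₁.one_mem, R₂.one_mem⟩
  rep := fun p => (R₁.rep p.1, R₂.rep p.2)
  rep_mem := fun p => Finset.mem_product.mpr ⟨R₁.rep_mem p.1, R₂.rep_mem p.2⟩
  rep_spec := fun p => Subgroup.mem_prod.mpr ⟨R₁.rep_spec p.1, R₂.rep_spec p.2⟩
  rep_idem := fun x hx => by
    rcases Finset.mem_product.mp hx with ⟨h1, h2⟩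
    exact Prod.ext_iff.mpr ⟨R₁.rep_idem x.1 h1, R₂.rep_idem x.2 h2⟩
  rep_coset := fun p v hv => by
    rcases Subgroup.mem_prod.mp hv with ⟨h1, h2⟩
    exact Prod.ext_iff.mpr ⟨R₁.rep_coset p.1 v.1 h1, R₂.rep_coset p.2 v.2 h2⟩

/-- The 1-form `𝐯̂(x,s) = ⟨𝐯, α(x,s)⟩` on a product, standard inner product. -/
def vhat2 {Γ₁ : Type*} [Group Γ₁] {Γ₂ : Type*} [Group Γ₂]
    {Λ₁ : Subgroup Γ₁} {Λ₂ : Subgroup Γ₂} {m₁ m₂ : ℕ}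
    (ψ₁ : Λ₁ ≃* Multiplicative (Fin m₁ → ℤ)) (R₁ : RepSystem Λ₁)
    (ψ₂ : Λ₂ ≃* Multiplicative (Fin m₂ → ℤ)) (R₂ : RepSystem Λ₂)
    (v : (Fin m₁ → ℝ) × (Fin m₂ → ℝ)) : (Γ₁ × Γ₂) → (Γ₁ × Γ₂) → ℝ :=
  fun x s => (∑ i, v.1 i * (cocycle ψ₁ R₁ x.1 s.1 i : ℝ)) +
    ∑ i, v.2 i * (cocycle ψ₂ R₂ x.2 s.2 i : ℝ)

/-- The 1-form `𝐯̂(x,s) = ⟨𝐯, α(x,s)⟩` on a product, orthogonal-sum of the two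
bilinear forms `B₁`, `B₂`. -/
def vhatB2 {Γ₁ : Type*} [Group Γ₁] {Γ₂ : Type*} [Group Γ₂]
    {Λ₁ : Subgroup Γ₁} {Λ₂ : Subgroup Γ₂} {m₁ m₂ : ℕ}
    (ψ₁ : Λ₁ ≃* Multiplicative (Fin m₁ → ℤ)) (R₁ : RepSystem Λ₁)
    (B₁ : (Fin m₁ → ℝ) →ₗ[ℝ] (Fin m₁ → ℝ) →ₗ[ℝ] ℝ)
    (ψ₂ : Λ₂ ≃* Multiplicative (Fin m₂ → ℤ)) (R₂ : RepSystem Λ₂)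
    (B₂ : (Fin m₂ → ℝ) →ₗ[ℝ] (Fin m₂ → ℝ) →ₗ[ℝ] ℝ)
    (v : (Fin m₁ → ℝ) × (Fin m₂ → ℝ)) : (Γ₁ × Γ₂) → (Γ₁ × Γ₂) → ℝ :=
  fun x s => B₁ v.1 (fun i => (cocycle ψ₁ R₁ x.1 s.1 i : ℝ)) +
    B₂ v.2 (fun i => (cocycle ψ₂ R₂ x.2 s.2 i : ℝ))

end


noncomputable section AuxForStatement11
set_option linter.unusedVariables false
set_option linter.unusedSectionVars false

variable {Γ : Type*} [Group Γ] {Λ : Subgroup Γ} {m : ℕ}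
variable (ψ : Λ ≃* Multiplicative (Fin m → ℤ)) (R : RepSystem Λ)

lemma rep_mul_mul (x s t : Γ) : R.rep (x * (s * t)) = R.rep (R.rep (x * s) * t) := by
  have h := R.rep_coset (R.rep (x * s) * t) (x * s * (R.rep (x * s))⁻¹) (R.rep_spec (x * s))
  rw [← h]; congr 1; group

lemma cocycle_add (x s t : Γ) :
    cocycle ψ R x (s * t) = cocycle ψ R x s + cocycle ψ R (R.rep (x * s)) t := by
  unfold cocycle
  have hrep : R.rep (x * (s * t)) = R.rep (R.rep (x * s) * t) := rep_mul_mul R x s t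
  have key : (⟨x * (s * t) * (R.rep (x * (s * t)))⁻¹, R.rep_spec (x * (s * t))⟩ : Λ) =
      ⟨x * s * (R.rep (x * s))⁻¹, R.rep_spec (x * s)⟩ *
      ⟨R.rep (x * s) * t * (R.rep (R.rep (x * s) * t))⁻¹, R.rep_spec (R.rep (x * s) * t)⟩ := by
    apply Subtype.ext
    simp only [MulMemClass.mk_mul_mk]
    rw [hrep]; group
  rw [key, _root_.map_mul, toAdd_mul]

lemma rep_one_eq (x : Γ) (hx : x ∈ R.Δ) : R.rep (x * 1) = x := by
  rw [mul_one]; exact R.rep_idem x hx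

lemma cocycle_one (y : Γ) (hy : y ∈ R.Δ) : cocycle ψ R y 1 = 0 := by
  unfold cocycle
  have key : (⟨y * 1 * (R.rep (y * 1))⁻¹, R.rep_spec (y * 1)⟩ : Λ) = 1 := by
    apply Subtype.ext
    simp only [Subgroup.coe_one]
    rw [rep_one_eq R y hy]; group
  rw [key, _root_.map_one, toAdd_one]

lemma rep_mul_lam (hN : Λ.Normal) (y : Γ) (hy : y ∈ R.Δ) (g : Γ) (hg : g ∈ Λ) :
    R.rep (y * g) = y := by
  have h : y * g = (y * g * y⁻¹) * y := by group
  rw [h, R.rep_coset y _ (hN.conj_mem g hg y), R.rep_idem y hy]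

lemma cocycle_lam (hN : Λ.Normal) (y : Γ) (hy : y ∈ R.Δ) (g : Γ) (hg : g ∈ Λ) :
    cocycle ψ R y g = Multiplicative.toAdd (ψ ⟨y * g * y⁻¹, hN.conj_mem g hg y⟩) := by
  unfold cocycle
  have key : (⟨y * g * (R.rep (y * g))⁻¹, R.rep_spec (y * g)⟩ : Λ) =
      ⟨y * g * y⁻¹, hN.conj_mem g hg y⟩ := by
    apply Subtype.ext
    simp only
    rw [rep_mul_lam R hN y hy g hg]
  rw [key]

-- probability lemmas
variable {G : Type*} [Group G] [Countable G]

lemma IsProb.le_one {ν : G → ℝ} (hν : IsProb ν) (g : G) : ν g ≤ 1 :=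
  le_hasSum hν.2 g (fun j _ => hν.1 j)

lemma conv_summand_summable {ν₁ ν₂ : G → ℝ} (h1 : IsProb ν₁) (h2 : IsProb ν₂) (g : G) :
    Summable (fun h => ν₁ h * ν₂ (h⁻¹ * g)) := by
  apply Summable.of_nonneg_of_le (fun h => mul_nonneg (h1.1 h) (h2.1 _))
    (fun h => ?_) h1.2.summable
  calc ν₁ h * ν₂ (h⁻¹ * g) ≤ ν₁ h * 1 := by
        exact mul_le_mul_of_nonneg_left (h2.le_one _) (h1.1 h)
    _ = ν₁ h := mul_one _

def shearEquiv (G : Type*) [Group G] : G × G ≃ G × G where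
  toFun p := (p.1, p.1 * p.2)
  invFun p := (p.1, p.1⁻¹ * p.2)
  left_inv p := by simp
  right_inv p := by simp

lemma summable_prod_mul {ν₁ ν₂ : G → ℝ} (h1 : IsProb ν₁) (h2 : IsProb ν₂) :
    Summable (fun p : G × G => ν₁ p.1 * ν₂ (p.1⁻¹ * p.2)) := by
  have hs : Summable (fun p : G × G => ν₁ p.1 * ν₂ p.2) :=
    h1.2.summable.mul_of_nonneg h2.2.summable h1.1 h2.1
  have : (fun p : G × G => ν₁ p.1 * ν₂ (p.1⁻¹ * p.2)) =
      (fun p : G × G => ν₁ p.1 * ν₂ p.2) ∘ (shearEquiv G).symm := rfl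
  rw [this, Equiv.summable_iff]
  exact hs

lemma hasSum_prod_shear {ν₁ ν₂ : G → ℝ} (h1 : IsProb ν₁) (h2 : IsProb ν₂) :
    HasSum (fun p : G × G => ν₁ p.1 * ν₂ (p.1⁻¹ * p.2)) 1 := by
  have hs : HasSum (fun p : G × G => ν₁ p.1 * ν₂ p.2) 1 := by
    have hS := h1.2.summable.mul_of_nonneg h2.2.summable h1.1 h2.1
    have heq : (1:ℝ) * 1 = ∑' p : G × G, ν₁ p.1 * ν₂ p.2 := HasSum.mul_eq h1.2 h2.2 hS.hasSum
    have h' : HasSum (fun p : G × G => ν₁ p.1 * ν₂ p.2) ((1:ℝ) * 1) := by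
      rw [heq]; exact hS.hasSum
    simpa using h'
  have : (fun p : G × G => ν₁ p.1 * ν₂ (p.1⁻¹ * p.2)) =
      (fun p : G × G => ν₁ p.1 * ν₂ p.2) ∘ (shearEquiv G).symm := rfl
  rw [this]
  exact ((Equiv.hasSum_iff (shearEquiv G).symm).2 hs)

lemma conv_isProb {ν₁ ν₂ : G → ℝ} (h1 : IsProb ν₁) (h2 : IsProb ν₂) :
    IsProb (conv ν₁ ν₂) := by
  constructor
  · intro g
    exact tsum_nonneg (fun h => mul_nonneg (h1.1 h) (h2.1 _))
  · have hswap : HasSum (fun p : G × G => ν₁ p.2 * ν₂ (p.2⁻¹ * p.1)) 1 := by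
      have := (Equiv.hasSum_iff (Equiv.prodComm G G)).2 (hasSum_prod_shear h1 h2)
      exact this
    refine hswap.prod_fiberwise (fun g => ?_)
    exact (conv_summand_summable h1 h2 g).hasSum

lemma convPow_isProb {μ : G → ℝ} (hμ : IsProb μ) : ∀ n, IsProb (convPow μ n)
  | 0 => ⟨fun g => by dsimp [convPow]; split <;> norm_num,
      by simpa [convPow] using hasSum_ite_eq (1 : G) (1 : ℝ)⟩
  | n + 1 => conv_isProb (convPow_isProb hμ n) hμ

lemma convPow_one_eq {μ : G → ℝ} (g : G) : convPow μ 1 g = μ g := by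
  show conv (convPow μ 0) μ g = μ g
  unfold conv convPow
  rw [tsum_eq_single (1 : G) (fun h hh => by simp [hh])]
  simp

lemma convPow_mul_le {μ : G → ℝ} (hμ : IsProb μ) :
    ∀ b a (h g : G), convPow μ a h * convPow μ b (h⁻¹ * g) ≤ convPow μ (a + b) g := by
  intro b
  induction b with
  | zero =>
    intro a h g
    show convPow μ a h * convPow μ 0 (h⁻¹ * g) ≤ convPow μ (a + 0) g
    by_cases hgh : h⁻¹ * g = 1
    · have hg : h = g := by rw [← inv_mul_eq_one]; exact hgh
      simp [convPow, hgh, hg]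
    · simp [convPow, hgh, (convPow_isProb hμ a).1 g]
  | succ b ih =>
    intro a h g
    have hb := convPow_isProb hμ b
    have hab := convPow_isProb hμ (a + b)
    show convPow μ a h * conv (convPow μ b) μ (h⁻¹ * g) ≤ conv (convPow μ (a + b)) μ g
    unfold conv
    rw [← tsum_mul_left]
    have hsum1 : Summable (fun k : G => convPow μ b k * μ (k⁻¹ * (h⁻¹ * g))) :=
      conv_summand_summable hb hμ _
    have hsum2 : Summable (fun j : G =>
        convPow μ a h * (convPow μ b (h⁻¹ * j) * μ ((h⁻¹ * j)⁻¹ * (h⁻¹ * g)))) := by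
      have := ((Equiv.mulLeft h⁻¹).summable_iff (f := fun k : G =>
        convPow μ b k * μ (k⁻¹ * (h⁻¹ * g)))).2 hsum1
      exact this.mul_left _
    calc ∑' k : G, convPow μ a h * (convPow μ b k * μ (k⁻¹ * (h⁻¹ * g)))
        = ∑' j : G, convPow μ a h * (convPow μ b (h⁻¹ * j) * μ ((h⁻¹ * j)⁻¹ * (h⁻¹ * g))) :=
          ((Equiv.mulLeft h⁻¹).tsum_eq (fun k : G =>
            convPow μ a h * (convPow μ b k * μ (k⁻¹ * (h⁻¹ * g))))).symm
      _ ≤ ∑' j : G, convPow μ (a + b) j * μ (j⁻¹ * g) := by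
          refine Summable.tsum_le_tsum (fun j => ?_) hsum2 (conv_summand_summable hab hμ g)
          rw [show (h⁻¹ * j)⁻¹ * (h⁻¹ * g) = j⁻¹ * g by group, ← mul_assoc]
          exact mul_le_mul_of_nonneg_right (ih a h j) (hμ.1 _)

lemma exists_convPow_pos {μ : G → ℝ} (hμ : IsProb μ) (g : G)
    (hg : g ∈ Subsemigroup.closure {x : G | 0 < μ x}) : ∃ n : ℕ, 0 < convPow μ (n + 1) g := by
  induction hg using Subsemigroup.closure_induction with
  | mem x hx => exact ⟨0, by rw [convPow_one_eq]; exact hx⟩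
  | mul x y hx hy ihx ihy =>
    obtain ⟨n₁, h₁⟩ := ihx
    obtain ⟨n₂, h₂⟩ := ihy
    refine ⟨n₁ + n₂ + 1, ?_⟩
    have hle := convPow_mul_le hμ (n₂ + 1) (n₁ + 1) x (x * y)
    rw [show x⁻¹ * (x * y) = y by group] at hle
    rw [show n₁ + 1 + (n₂ + 1) = n₁ + n₂ + 1 + 1 by omega] at hle
    exact lt_of_lt_of_le (mul_pos h₁ h₂) hle

variable [Countable Γ]

def EE (r : ℝ) : ℂ := Complex.exp (2 * Real.pi * Complex.I * (r : ℂ))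

def vip (ψ : Λ ≃* Multiplicative (Fin m → ℤ)) (R : RepSystem Λ) (v : Fin m → ℝ)
    (x s : Γ) : ℝ := ∑ i, v i * (cocycle ψ R x s i : ℝ)

lemma transferOp_eq (ν : Γ → ℝ) (v : Fin m → ℝ) (f : Γ → ℂ) (x : Γ) :
    transferOp ψ R ν v f x = ∑' s : Γ, (ν s : ℂ) * EE (vip ψ R v x s) * f (R.rep (x * s)) := rfl

lemma EE_abs (r : ℝ) : ‖EE r‖ = 1 := by
  rw [EE, Complex.norm_exp]
  have : (2 * (Real.pi : ℂ) * Complex.I * (r : ℂ)).re = 0 := by simp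
  rw [this, Real.exp_zero]

lemma EE_add (r s : ℝ) : EE (r + s) = EE r * EE s := by
  rw [EE, EE, EE, ← Complex.exp_add]
  congr 1
  push_cast
  ring

lemma EE_zero : EE 0 = 1 := by simp [EE]

lemma vip_add (v : Fin m → ℝ) (x s t : Γ) :
    vip ψ R v x (s * t) = vip ψ R v x s + vip ψ R v (R.rep (x * s)) t := by
  unfold vip
  rw [← Finset.sum_add_distrib]
  refine Finset.sum_congr rfl (fun i _ => ?_)
  rw [cocycle_add ψ R x s t, Pi.add_apply]
  push_cast
  ring

lemma term_norm {ν : Γ → ℝ} (hν : IsProb ν) {f : Γ → ℂ} {B : ℝ}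
    (hf : ∀ y ∈ R.Δ, ‖f y‖ ≤ B) (v : Fin m → ℝ) (x s : Γ) :
    ‖(ν s : ℂ) * EE (vip ψ R v x s) * f (R.rep (x * s))‖ ≤ ν s * B := by
  rw [show ‖(ν s : ℂ) * EE (vip ψ R v x s) * f (R.rep (x * s))‖ =
    ‖(ν s : ℂ)‖ * ‖EE (vip ψ R v x s)‖ *
      ‖f (R.rep (x * s))‖ by simp]
  rw [EE_abs, mul_one]
  have h1 : ‖(ν s : ℂ)‖ = ν s := by
    rw [Complex.norm_real, Real.norm_eq_abs, abs_of_nonneg (hν.1 s)]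
  rw [h1]
  exact mul_le_mul_of_nonneg_left (hf _ (R.rep_mem _)) (hν.1 s)

lemma summable_term {ν : Γ → ℝ} (hν : IsProb ν) {f : Γ → ℂ} {B : ℝ}
    (hf : ∀ y ∈ R.Δ, ‖f y‖ ≤ B) (v : Fin m → ℝ) (x : Γ) :
    Summable (fun s : Γ => (ν s : ℂ) * EE (vip ψ R v x s) * f (R.rep (x * s))) :=
  Summable.of_norm_bounded (hν.2.summable.mul_right B) (term_norm ψ R hν hf v x)

lemma op_bound {ν : Γ → ℝ} (hν : IsProb ν) {f : Γ → ℂ} {B : ℝ}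
    (hf : ∀ y ∈ R.Δ, ‖f y‖ ≤ B) (v : Fin m → ℝ) (x : Γ) :
    ‖transferOp ψ R ν v f x‖ ≤ B := by
  rw [transferOp_eq]
  have hsn : Summable (fun s : Γ => ‖(ν s : ℂ) * EE (vip ψ R v x s) * f (R.rep (x * s))‖) :=
    Summable.of_nonneg_of_le (fun s => norm_nonneg _) (term_norm ψ R hν hf v x)
      (hν.2.summable.mul_right B)
  calc ‖∑' s : Γ, (ν s : ℂ) * EE (vip ψ R v x s) * f (R.rep (x * s))‖
      ≤ ∑' s : Γ, ‖(ν s : ℂ) * EE (vip ψ R v x s) * f (R.rep (x * s))‖ :=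
        norm_tsum_le_tsum_norm hsn
    _ ≤ ∑' s : Γ, ν s * B :=
        Summable.tsum_le_tsum (term_norm ψ R hν hf v x) hsn (hν.2.summable.mul_right B)
    _ = 1 * B := by rw [tsum_mul_right, hν.2.tsum_eq]
    _ = B := one_mul B

lemma transferOp_comp {ν₁ ν₂ : Γ → ℝ} (h1 : IsProb ν₁) (h2 : IsProb ν₂)
    {f : Γ → ℂ} {B : ℝ} (hf : ∀ y ∈ R.Δ, ‖f y‖ ≤ B) (v : Fin m → ℝ) (x : Γ) :
    transferOp ψ R ν₁ v (transferOp ψ R ν₂ v f) x = transferOp ψ R (conv ν₁ ν₂) v f x := by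
  classical
  set G : Γ × Γ → ℂ := fun p =>
    (ν₁ p.1 : ℂ) * (ν₂ (p.1⁻¹ * p.2) : ℂ) * (EE (vip ψ R v x p.2) * f (R.rep (x * p.2))) with hG
  have hB0 : 0 ≤ B := le_trans (norm_nonneg _) (hf 1 R.one_mem)
  have hGsum : Summable G := by
    refine Summable.of_norm_bounded (g := fun p : Γ × Γ => ν₁ p.1 * ν₂ (p.1⁻¹ * p.2) * B)
      ((summable_prod_mul h1 h2).mul_right B) (fun p => ?_)
    rw [hG]
    simp only [norm_mul, Complex.norm_real, Real.norm_eq_abs,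
      abs_of_nonneg (h1.1 _), abs_of_nonneg (h2.1 _), EE_abs, one_mul]
    rw [mul_assoc (ν₁ p.1) (ν₂ (p.1⁻¹ * p.2)) B, mul_assoc]
    exact mul_le_mul_of_nonneg_left
      (mul_le_mul_of_nonneg_left (hf _ (R.rep_mem _)) (h2.1 _)) (h1.1 _)
  have hGe : Summable (G ∘ (shearEquiv Γ)) := (Equiv.summable_iff _).2 hGsum
  -- step 1 : LHS as double sum
  have step1 : transferOp ψ R ν₁ v (transferOp ψ R ν₂ v f) x = ∑' s : Γ, ∑' t : Γ, G ((shearEquiv Γ) (s, t)) := by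
    rw [transferOp_eq]
    refine tsum_congr (fun s => ?_)
    rw [transferOp_eq, ← tsum_mul_left]
    refine tsum_congr (fun t => ?_)
    show (ν₁ s : ℂ) * EE (vip ψ R v x s) *
        ((ν₂ t : ℂ) * EE (vip ψ R v (R.rep (x * s)) t) * f (R.rep (R.rep (x * s) * t))) = _
    have e1 : R.rep (R.rep (x * s) * t) = R.rep (x * (s * t)) := (rep_mul_mul R x s t).symm
    show _ = (ν₁ s : ℂ) * (ν₂ (s⁻¹ * (s * t)) : ℂ) *
        (EE (vip ψ R v x (s * t)) * f (R.rep (x * (s * t))))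
    rw [e1, vip_add ψ R v x s t, EE_add, show s⁻¹ * (s * t) = t by group]
    ring
  -- step 2 : to a single sum over the product, and unshear
  have step2 : ∑' s : Γ, ∑' t : Γ, G ((shearEquiv Γ) (s, t)) = ∑' p : Γ × Γ, G p := by
    rw [← (shearEquiv Γ).tsum_eq G]
    exact (Summable.tsum_prod' hGe (fun s => hGe.prod_factor s)).symm
  -- step 3 : swap and fiber over second coordinate
  have hGswap : Summable (fun p : Γ × Γ => G (p.2, p.1)) := by
    have : (fun p : Γ × Γ => G (p.2, p.1)) = G ∘ (Equiv.prodComm Γ Γ) := rfl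
    rw [this, Equiv.summable_iff]
    exact hGsum
  have step3 : ∑' p : Γ × Γ, G p = ∑' g : Γ, ∑' s : Γ, G (s, g) := by
    rw [← (Equiv.prodComm Γ Γ).tsum_eq G]
    exact Summable.tsum_prod' hGswap (fun g => hGswap.prod_factor g)
  -- step 4 : identify the inner sum with the convolution
  have step4 : ∀ g : Γ, ∑' s : Γ, G (s, g) =
      (conv ν₁ ν₂ g : ℂ) * EE (vip ψ R v x g) * f (R.rep (x * g)) := by
    intro g
    have : ∀ s : Γ, G (s, g) = ((ν₁ s * ν₂ (s⁻¹ * g) : ℝ) : ℂ) *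
        (EE (vip ψ R v x g) * f (R.rep (x * g))) := by
      intro s; rw [hG]; push_cast; ring
    rw [tsum_congr this, tsum_mul_right, ← Complex.ofReal_tsum]
    rw [show conv ν₁ ν₂ g = ∑' s : Γ, ν₁ s * ν₂ (s⁻¹ * g) from rfl]
    ring
  rw [step1, step2, step3, tsum_congr step4, transferOp_eq]

lemma transferOp_iterate {μ : Γ → ℝ} (hμ : IsProb μ) (v : Fin m → ℝ) {B : ℝ} :
    ∀ n (f : Γ → ℂ), (∀ y ∈ R.Δ, ‖f y‖ ≤ B) → ∀ x : Γ,
      (transferOp ψ R μ v)^[n + 1] f x = transferOp ψ R (convPow μ (n + 1)) v f x := by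
  intro n
  induction n with
  | zero =>
    intro f hf x
    rw [Function.iterate_one, transferOp_eq, transferOp_eq]
    exact tsum_congr (fun s => by rw [convPow_one_eq])
  | succ n ih =>
    intro f hf x
    rw [Function.iterate_succ_apply]
    have hf' : ∀ y ∈ R.Δ, ‖transferOp ψ R μ v f y‖ ≤ B :=
      fun y _ => op_bound ψ R hμ hf v y
    rw [ih (transferOp ψ R μ v f) hf' x]
    show transferOp ψ R (convPow μ (n + 1)) v (transferOp ψ R μ v f) x = _
    rw [transferOp_comp ψ R (convPow_isProb hμ (n + 1)) hμ hf v x]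
    rfl

-- numeric helpers
lemma abs_add_mul_exp (a b θ : ℝ) :
    ‖(a : ℂ) + (b : ℂ) * Complex.exp ((θ : ℂ) * Complex.I)‖ =
      Real.sqrt (a ^ 2 + b ^ 2 + 2 * a * b * Real.cos θ) := by
  rw [Complex.exp_mul_I, Complex.norm_def, Complex.normSq_apply]
  simp only [Complex.add_re, Complex.add_im, Complex.mul_re, Complex.mul_im,
    Complex.ofReal_re, Complex.ofReal_im, Complex.I_re, Complex.I_im,
    Complex.cos_ofReal_re, Complex.cos_ofReal_im, Complex.sin_ofReal_re, Complex.sin_ofReal_im]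
  ring_nf
  congr 1
  nlinarith [Real.sin_sq_add_cos_sq θ]

lemma sqrt_quad_le (a b cθ : ℝ) (ha : 0 ≤ a) (hb : 0 ≤ b) (hab : a + b ≤ 1)
    (hc : -1 ≤ cθ) (hc1 : cθ ≤ 1) :
    Real.sqrt (a ^ 2 + b ^ 2 + 2 * a * b * cθ) ≤ a + b - a * b * (1 - cθ) := by
  have h1 : 0 ≤ a + b - a * b * (1 - cθ) := by nlinarith [mul_nonneg ha hb]
  calc Real.sqrt (a ^ 2 + b ^ 2 + 2 * a * b * cθ)
      ≤ Real.sqrt ((a + b - a * b * (1 - cθ)) ^ 2) := by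
        refine Real.sqrt_le_sqrt ?_
        nlinarith [mul_nonneg (mul_nonneg ha hb) (sub_nonneg.2 hc1),
          mul_nonneg (mul_nonneg (mul_nonneg ha hb) (sub_nonneg.2 hc1)) (sub_nonneg.2 hab),
          sq_nonneg (a * b * (1 - cθ))]
    _ = a + b - a * b * (1 - cθ) := Real.sqrt_sq h1

lemma EE_eq_exp_mul_I (r : ℝ) : EE r = Complex.exp (((2 * Real.pi * r : ℝ) : ℂ) * Complex.I) := by
  rw [EE]; congr 1; push_cast; ring

lemma contract_step (hN : Λ.Normal) {ν : Γ → ℝ} (hν : IsProb ν) (g : Γ) (hgΛ : g ∈ Λ)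
    (hg1 : g ≠ 1) {f : Γ → ℂ} {B : ℝ}
    (hf : ∀ y ∈ R.Δ, ‖f y‖ ≤ B) (v : Fin m → ℝ) (y : Γ) (hy : y ∈ R.Δ) :
    ‖transferOp ψ R ν v f y‖ ≤
      (1 - ν 1 * ν g * (1 - Real.cos (2 * Real.pi * vip ψ R v y g))) * B := by
  classical
  have hB0 : 0 ≤ B := le_trans (norm_nonneg _) (hf y hy)
  set F : Γ → ℂ := fun s => (ν s : ℂ) * EE (vip ψ R v y s) * f (R.rep (y * s)) with hFdef
  have hFsum : Summable F := summable_term ψ R hν hf v y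
  set T : Finset Γ := {1, g} with hT
  have h1g : (1 : Γ) ≠ g := fun h => hg1 h.symm
  -- split the sum
  have hsplit : ∑' s : Γ, F s = (F 1 + F g) + ∑' s : ↑((T : Set Γ))ᶜ, F s := by
    rw [← Summable.sum_add_tsum_compl (s := T) hFsum]
    congr 1
    rw [hT, Finset.sum_pair h1g]
  -- compute F 1 and F g
  have hrep1 : R.rep (y * 1) = y := rep_one_eq R y hy
  have hrepg : R.rep (y * g) = y := rep_mul_lam R hN y hy g hgΛ
  have hvip1 : vip ψ R v y 1 = 0 := by
    unfold vip; rw [cocycle_one ψ R y hy]; simp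
  have hF1 : F 1 = (ν 1 : ℂ) * f y := by
    rw [hFdef]; simp only; rw [hvip1, EE_zero, hrep1, mul_one]
  have hFg : F g = (ν g : ℂ) * EE (vip ψ R v y g) * f y := by
    rw [hFdef]; simp only; rw [hrepg]
  -- bound the head
  set θ : ℝ := 2 * Real.pi * vip ψ R v y g with hθ
  have hhead : ‖F 1 + F g‖ ≤
      (ν 1 + ν g - ν 1 * ν g * (1 - Real.cos θ)) * B := by
    rw [hF1, hFg]
    have : (ν 1 : ℂ) * f y + (ν g : ℂ) * EE (vip ψ R v y g) * f y =
        ((ν 1 : ℂ) + (ν g : ℂ) * EE (vip ψ R v y g)) * f y := by ring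
    rw [this, norm_mul]
    have habs : ‖(ν 1 : ℂ) + (ν g : ℂ) * EE (vip ψ R v y g)‖ =
        Real.sqrt ((ν 1) ^ 2 + (ν g) ^ 2 + 2 * (ν 1) * (ν g) * Real.cos θ) := by
      rw [EE_eq_exp_mul_I, abs_add_mul_exp, hθ]
    rw [habs]
    have hab1 : ν 1 + ν g ≤ 1 := by
      have := Summable.sum_le_tsum T (fun i _ => hν.1 i) hν.2.summable
      rw [hν.2.tsum_eq, hT, Finset.sum_pair h1g] at this
      exact this
    have hkey := sqrt_quad_le (ν 1) (ν g) (Real.cos θ) (hν.1 1) (hν.1 g) hab1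
      (Real.neg_one_le_cos θ) (Real.cos_le_one θ)
    exact mul_le_mul hkey (hf y hy) (norm_nonneg _) ((Real.sqrt_nonneg _).trans hkey)
  -- bound the tail
  have htail : ‖∑' s : ↑((T : Set Γ))ᶜ, F s‖ ≤ (1 - (ν 1 + ν g)) * B := by
    have hsn : Summable (fun s : ↑((T : Set Γ))ᶜ => ‖F s‖) := by
      refine Summable.of_nonneg_of_le (fun s => norm_nonneg _) (fun s => term_norm ψ R hν hf v y s) ?_
      exact (hν.2.summable.mul_right B).subtype _
    have h2 : ∑' s : ↑((T : Set Γ))ᶜ, ν (s : Γ) * B = (1 - (ν 1 + ν g)) * B := by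
      have h0 := Summable.sum_add_tsum_compl (s := T) (hν.2.summable.mul_right B)
      rw [tsum_mul_right, tsum_mul_right, hν.2.tsum_eq, one_mul, hT,
        Finset.sum_pair h1g] at h0
      rw [tsum_mul_right]
      linarith
    calc ‖∑' s : ↑((T : Set Γ))ᶜ, F s‖
        ≤ ∑' s : ↑((T : Set Γ))ᶜ, ‖F s‖ := by
          exact norm_tsum_le_tsum_norm hsn
      _ ≤ ∑' s : ↑((T : Set Γ))ᶜ, ν (s : Γ) * B := by
          refine Summable.tsum_le_tsum (fun s => term_norm ψ R hν hf v y s) hsn ?_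
          exact (hν.2.summable.mul_right B).subtype _
      _ = (1 - (ν 1 + ν g)) * B := h2
  calc ‖transferOp ψ R ν v f y‖ = ‖(F 1 + F g) + ∑' s : ↑((T : Set Γ))ᶜ, F s‖ := by
        rw [transferOp_eq, ← hFdef, hsplit]
    _ ≤ ‖F 1 + F g‖ + ‖∑' s : ↑((T : Set Γ))ᶜ, F s‖ := norm_add_le _ _
    _ ≤ (ν 1 + ν g - ν 1 * ν g * (1 - Real.cos θ)) * B + (1 - (ν 1 + ν g)) * B := add_le_add hhead htail
    _ = (1 - ν 1 * ν g * (1 - Real.cos θ)) * B := by ring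

-- generators of the lattice
def gee (j : Fin m) : Γ := ((ψ.symm (Multiplicative.ofAdd (Pi.single j 1)) : Λ) : Γ)

lemma gee_mem (j : Fin m) : gee ψ j ∈ Λ := (ψ.symm (Multiplicative.ofAdd (Pi.single j 1))).2

lemma gee_ne_one (hm : 1 ≤ m) (j : Fin m) : gee ψ (j : Fin m) ≠ 1 := by
  intro h
  have h1 : (ψ.symm (Multiplicative.ofAdd (Pi.single j 1)) : Λ) = 1 := by
    apply Subtype.ext; exact h
  have h2 : Multiplicative.ofAdd (Pi.single j (1 : ℤ)) = (1 : Multiplicative (Fin m → ℤ)) := by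
    have := congrArg ψ h1
    rwa [MulEquiv.apply_symm_apply, _root_.map_one] at this
  have h3 : (Pi.single j (1 : ℤ)) = (0 : Fin m → ℤ) := by
    simpa using congrArg Multiplicative.toAdd h2
  have := congrFun h3 j
  rw [Pi.single_eq_same] at this
  exact one_ne_zero this

def Dco (y : Γ) (k : Fin m) : Fin m → ℤ := cocycle ψ R 1 (y⁻¹ * gee ψ k * y)

lemma cocycle_one_lam (hN : Λ.Normal) (g : Γ) (hg : g ∈ Λ) :
    cocycle ψ R 1 g = Multiplicative.toAdd (ψ ⟨g, hg⟩) := by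
  rw [cocycle_lam ψ R hN 1 R.one_mem g hg]
  congr 1
  apply congrArg
  apply Subtype.ext
  simp

lemma conj_mem' (hN : Λ.Normal) (y g : Γ) (hg : g ∈ Λ) : y⁻¹ * g * y ∈ Λ := by
  have := hN.conj_mem g hg y⁻¹
  rwa [inv_inv] at this

lemma Dco_spec (hN : Λ.Normal) (y : Γ) (hy : y ∈ R.Δ) (k : Fin m) :
    ∑ j, (Dco ψ R y k j) • cocycle ψ R y (gee ψ j) = Pi.single k 1 := by
  classical
  set W : (Fin m → ℤ) → (Fin m → ℤ) :=
    fun w => cocycle ψ R y ((ψ.symm (Multiplicative.ofAdd w) : Λ) : Γ) with hW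
  have hWadd : ∀ w w', W (w + w') = W w + W w' := by
    intro w w'
    rw [hW]
    simp only
    have hsymm : (ψ.symm (Multiplicative.ofAdd (w + w')) : Λ) =
        ψ.symm (Multiplicative.ofAdd w) * ψ.symm (Multiplicative.ofAdd w') := by
      rw [← _root_.map_mul]; rfl
    set u := ψ.symm (Multiplicative.ofAdd w) with hu
    set u' := ψ.symm (Multiplicative.ofAdd w') with hu'
    rw [hsymm]
    rw [cocycle_lam ψ R hN y hy _ (u * u').2, cocycle_lam ψ R hN y hy _ u.2,
      cocycle_lam ψ R hN y hy _ u'.2]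
    have key : (⟨y * ((u * u' : Λ) : Γ) * y⁻¹, hN.conj_mem _ (u * u').2 y⟩ : Λ) =
        ⟨y * (u : Γ) * y⁻¹, hN.conj_mem _ u.2 y⟩ * ⟨y * (u' : Γ) * y⁻¹, hN.conj_mem _ u'.2 y⟩ := by
      apply Subtype.ext
      simp only [MulMemClass.mk_mul_mk, Subgroup.coe_mul]
      group
    rw [key, _root_.map_mul, toAdd_mul]
  set τ : (Fin m → ℤ) →+ (Fin m → ℤ) := AddMonoidHom.mk' W hWadd with hτ
  have hWe : ∀ j, W (Pi.single j 1) = cocycle ψ R y (gee ψ j) := fun j => rfl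
  have hsingle : ∀ w : Fin m → ℤ, ∑ j, w j • (Pi.single j 1 : Fin m → ℤ) = w := by
    intro w
    have h : ∀ j, w j • (Pi.single j 1 : Fin m → ℤ) = (Pi.single j (w j) : Fin m → ℤ) := by
      intro j; ext i
      by_cases hij : i = j
      · subst hij; simp
      · simp [Pi.single_eq_of_ne hij]
    rw [Finset.sum_congr rfl (fun j _ => h j), Finset.univ_sum_single]
  calc ∑ j, (Dco ψ R y k j) • cocycle ψ R y (gee ψ j)
      = ∑ j, (Dco ψ R y k j) • τ ((Pi.single j 1 : Fin m → ℤ)) := by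
        refine Finset.sum_congr rfl (fun j _ => ?_)
        rw [show τ ((Pi.single j 1 : Fin m → ℤ)) = W (Pi.single j 1) from rfl, hWe j]
    _ = τ (∑ j, (Dco ψ R y k j) • (Pi.single j 1 : Fin m → ℤ)) := by
        rw [map_sum]
        exact Finset.sum_congr rfl (fun j _ => (map_zsmul τ _ _).symm)
    _ = τ (Dco ψ R y k) := by rw [hsingle]
    _ = Pi.single k 1 := by
        show W (Dco ψ R y k) = Pi.single k 1
        rw [hW]
        simp only
        have hD : Dco ψ R y k =
            Multiplicative.toAdd (ψ ⟨y⁻¹ * gee ψ k * y, conj_mem' hN y _ (gee_mem ψ k)⟩) := by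
          rw [Dco, cocycle_one_lam ψ R hN _ (conj_mem' hN y _ (gee_mem ψ k))]
        rw [hD]
        have hsy : (ψ.symm (Multiplicative.ofAdd (Multiplicative.toAdd
            (ψ ⟨y⁻¹ * gee ψ k * y, conj_mem' hN y _ (gee_mem ψ k)⟩))) : Λ) =
            ⟨y⁻¹ * gee ψ k * y, conj_mem' hN y _ (gee_mem ψ k)⟩ := by
          rw [ofAdd_toAdd, MulEquiv.symm_apply_apply]
        rw [hsy]
        rw [cocycle_lam ψ R hN y hy _ (conj_mem' hN y _ (gee_mem ψ k))]
        have key : (⟨y * (y⁻¹ * gee ψ k * y) * y⁻¹, hN.conj_mem _ (conj_mem' hN y _ (gee_mem ψ k)) y⟩ : Λ) =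
            ψ.symm (Multiplicative.ofAdd (Pi.single k 1)) := by
          apply Subtype.ext
          show y * (y⁻¹ * gee ψ k * y) * y⁻¹ = gee ψ k
          group
        rw [key, MulEquiv.apply_symm_apply, toAdd_ofAdd]


lemma exists_good_index (hN : Λ.Normal) (δ : ℝ) (y : Γ) (hy : y ∈ R.Δ) (v : Fin m → ℝ)
    (hv1 : ∀ i, -(1/2) ≤ v i ∧ v i < 1/2) (hv2 : ∃ i, δ ≤ |v i|) (η : ℝ) (hη : 0 < η)
    (hηK : ∀ k, η * (∑ j, |(Dco ψ R y k j : ℝ)|) < min δ (1/3)) :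
    ∃ j, ∀ n : ℤ, η < |vip ψ R v y (gee ψ j) - n| := by
  classical
  by_contra hcon
  push_neg at hcon
  choose nn hnn using hcon
  have hvabs : ∀ i, |v i| ≤ 1/2 := fun i => abs_le.2 ⟨(hv1 i).1, le_of_lt (hv1 i).2⟩
  have hvk : ∀ k, v k = ∑ j, (Dco ψ R y k j : ℝ) * vip ψ R v y (gee ψ j) := by
    intro k
    have hDs := Dco_spec ψ R hN y hy k
    have h1 : v k = ∑ i, v i * ((Pi.single k 1 : Fin m → ℤ) i : ℝ) := by
      rw [Finset.sum_eq_single k]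
      · simp
      · intro i _ hik; rw [Pi.single_eq_of_ne hik]; simp
      · intro h; exact absurd (Finset.mem_univ k) h
    rw [h1, ← hDs]
    unfold vip
    simp only [Finset.sum_apply, Pi.smul_apply, smul_eq_mul]
    push_cast
    simp only [Finset.mul_sum]
    rw [Finset.sum_comm]
    exact Finset.sum_congr rfl fun j _ => Finset.sum_congr rfl fun i _ => by ring
  set I : Fin m → ℤ := fun k => ∑ j, Dco ψ R y k j * nn j with hI
  have hclose : ∀ k, |v k - (I k : ℝ)| < min δ (1/3) := by
    intro k
    have hdiff : v k - (I k : ℝ) =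
        ∑ j, (Dco ψ R y k j : ℝ) * (vip ψ R v y (gee ψ j) - (nn j : ℝ)) := by
      rw [hvk k, hI]
      push_cast
      rw [← Finset.sum_sub_distrib]
      refine Finset.sum_congr rfl (fun j _ => ?_)
      ring
    calc |v k - (I k : ℝ)| = |∑ j, (Dco ψ R y k j : ℝ) * (vip ψ R v y (gee ψ j) - (nn j : ℝ))| := by
          rw [hdiff]
      _ ≤ ∑ j, |(Dco ψ R y k j : ℝ) * (vip ψ R v y (gee ψ j) - (nn j : ℝ))| :=
          Finset.abs_sum_le_sum_abs _ _
      _ ≤ ∑ j, |(Dco ψ R y k j : ℝ)| * η := by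
          refine Finset.sum_le_sum (fun j _ => ?_)
          rw [abs_mul]
          exact mul_le_mul_of_nonneg_left (hnn j) (abs_nonneg _)
      _ = η * ∑ j, |(Dco ψ R y k j : ℝ)| := by rw [← Finset.sum_mul]; ring
      _ < min δ (1/3) := hηK k
  have hI0 : ∀ k, I k = 0 := by
    intro k
    by_contra hk
    have h1 : (1 : ℝ) ≤ |(I k : ℝ)| := by
      have := Int.one_le_abs hk
      calc (1:ℝ) = ((1:ℤ):ℝ) := by norm_num
        _ ≤ ((|I k| : ℤ) : ℝ) := by exact_mod_cast this
        _ = |(I k : ℝ)| := by push_cast; ring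
    have h2 : |(I k : ℝ)| ≤ |v k| + |v k - (I k : ℝ)| := by
      calc |(I k : ℝ)| = |v k - (v k - (I k : ℝ))| := by ring_nf
        _ ≤ |v k| + |v k - (I k : ℝ)| := abs_sub _ _
    have h3 := hclose k
    have h4 := hvabs k
    have h5 : min δ (1/3) ≤ 1/3 := min_le_right _ _
    linarith
  obtain ⟨i, hi⟩ := hv2
  have := hclose i
  rw [hI0 i] at this
  simp only [Int.cast_zero, sub_zero] at this
  have hmin : min δ (1/3) ≤ δ := min_le_left _ _
  linarith

lemma cos_bound (t η : ℝ) (hη0 : 0 < η) (hη3 : η ≤ 1/3)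
    (hfar : ∀ n : ℤ, η < |t - n|) :
    Real.cos (2 * Real.pi * t) ≤ Real.cos (2 * Real.pi * η) := by
  have hπ := Real.pi_pos
  set d := |t - (round t : ℝ)| with hd
  have hd2 : d ≤ 1/2 := by rw [hd]; exact abs_sub_round t
  have hdη : η < d := hfar (round t)
  have h1 : Real.cos (2 * Real.pi * t) = Real.cos (2 * Real.pi * d) := by
    have e1 : Real.cos (2 * Real.pi * t) =
        Real.cos (2 * Real.pi * t - (round t : ℝ) * (2 * Real.pi)) :=
      (Real.cos_sub_int_mul_two_pi _ (round t)).symm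
    rw [e1, show 2 * Real.pi * t - (round t : ℝ) * (2 * Real.pi) =
      2 * Real.pi * (t - (round t : ℝ)) by ring, ← Real.cos_abs,
      show |2 * Real.pi * (t - (round t : ℝ))| = 2 * Real.pi * d by
        rw [abs_mul, abs_of_pos (by linarith : (0:ℝ) < 2 * Real.pi)]]
  rw [h1]
  refine Real.cos_le_cos_of_nonneg_of_le_pi (by positivity) ?_ ?_
  · nlinarith
  · nlinarith

end AuxForStatement11

set_option maxHeartbeats 2000000 in
/-- For an aperiodic non-degenerate `μ`, the iterates of the perturbed
transfer operator decay exponentially, uniformly outside any neighborhood of `0` in the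
fundamental domain `[−1/2,1/2)^m`. -/
theorem transfer_op_exponential_decay
    {Γ : Type*} [Group Γ] [Countable Γ] {Λ : Subgroup Γ} (hN : Λ.Normal)
    (hI : Λ.index ≠ 0) {m : ℕ} (hm : 1 ≤ m) (ψ : Λ ≃* Multiplicative (Fin m → ℤ))
    (R : RepSystem Λ) (μ : Γ → ℝ) (hμ : IsProb μ) (hnd : Nondeg μ) (hap : Aperiodic μ)
    (δ : ℝ) (hδ : 0 < δ) :
    ∃ c C : ℝ, 0 < c ∧ 0 < C ∧
      ∀ n : ℕ, ∀ x ∈ R.Δ, ∀ v : Fin m → ℝ,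
        (∀ i, -(1/2) ≤ v i ∧ v i < 1/2) → (∃ i, δ ≤ |v i|) →
        ‖(transferOp ψ R μ v)^[n] (fun y => if y = x then 1 else 0) 1‖ ≤
          C * Real.exp (-c * n) := by
  classical
  obtain ⟨Nap, hNap⟩ := hap
  have hgen : ∀ j : Fin m, ∃ n : ℕ, 0 < convPow μ (n + 1) (gee ψ j) :=
    fun j => exists_convPow_pos hμ _ (hnd _)
  choose ng hng using hgen
  set M : ℕ := ∑ j, (ng j + 1) with hM
  set N : ℕ := Nap + 1 + M with hNdef
  have hN1 : 1 ≤ N := by omega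
  set νN := convPow μ N with hνNdef
  have hνNp : IsProb νN := convPow_isProb hμ N
  have ha : 0 < νN 1 := hNap N (by omega)
  have hb : ∀ j, 0 < νN (gee ψ j) := by
    intro j
    have hle : ng j + 1 ≤ M := by
      rw [hM]
      exact Finset.single_le_sum (f := fun j => ng j + 1) (fun i _ => by omega)
        (Finset.mem_univ j)
    have h2 : 0 < convPow μ (Nap + 1 + (M - (ng j + 1))) 1 := hNap _ (by omega)
    have h3 := convPow_mul_le hμ (Nap + 1 + (M - (ng j + 1))) (ng j + 1) (gee ψ j) (gee ψ j)
    rw [show (gee ψ j)⁻¹ * gee ψ j = 1 by group] at h3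
    rw [show ng j + 1 + (Nap + 1 + (M - (ng j + 1))) = N by omega] at h3
    exact lt_of_lt_of_le (mul_pos (hng j) h2) h3
  haveI hFm : Nonempty (Fin m) := ⟨⟨0, hm⟩⟩
  set bmin : ℝ := Finset.univ.inf' Finset.univ_nonempty (fun j => νN (gee ψ j)) with hbmindef
  have hbmin : 0 < bmin := by
    rw [hbmindef, Finset.lt_inf'_iff]
    exact fun j _ => hb j
  have hbmin_le : ∀ j, bmin ≤ νN (gee ψ j) :=
    fun j => Finset.inf'_le _ (Finset.mem_univ j)
  -- the constant K
  set K : ℝ := R.Δ.sup' ⟨1, R.one_mem⟩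
    (fun y => Finset.univ.sup' Finset.univ_nonempty
      (fun k => ∑ j, |(Dco ψ R y k j : ℝ)|)) with hKdef
  have hK : ∀ y ∈ R.Δ, ∀ k, ∑ j, |(Dco ψ R y k j : ℝ)| ≤ K := by
    intro y hy k
    refine le_trans (Finset.le_sup' (f := fun k => ∑ j, |(Dco ψ R y k j : ℝ)|)
      (Finset.mem_univ k)) ?_
    exact Finset.le_sup' (fun y => Finset.univ.sup' Finset.univ_nonempty
      (fun k => ∑ j, |(Dco ψ R y k j : ℝ)|)) hy
  have hK0 : 0 ≤ K :=
    le_trans (Finset.sum_nonneg (fun j _ => abs_nonneg _)) (hK 1 R.one_mem ⟨0, hm⟩)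
  set η : ℝ := min δ (1/3) / (K + 1) with hηdef
  have hmin0 : 0 < min δ (1/3) := lt_min hδ (by norm_num)
  have hη0 : 0 < η := div_pos hmin0 (by linarith)
  have hη3 : η ≤ 1/3 := by
    have h1 : η ≤ min δ (1/3) := by
      rw [hηdef]
      exact div_le_self hmin0.le (by linarith)
    exact le_trans h1 (min_le_right _ _)
  have hηK : ∀ y ∈ R.Δ, ∀ k, η * (∑ j, |(Dco ψ R y k j : ℝ)|) < min δ (1/3) := by
    intro y hy k
    calc η * (∑ j, |(Dco ψ R y k j : ℝ)|) ≤ η * K :=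
          mul_le_mul_of_nonneg_left (hK y hy k) hη0.le
      _ < η * (K + 1) := by nlinarith
      _ = min δ (1/3) := by rw [hηdef]; field_simp
  set κ : ℝ := 1 - Real.cos (2 * Real.pi * η) with hκdef
  have hπ := Real.pi_pos
  have h2πη : 0 < 2 * Real.pi * η := by positivity
  have h2πηπ : 2 * Real.pi * η ≤ Real.pi := by nlinarith
  have hκ0 : 0 < κ := by
    have := Real.strictAntiOn_cos (Set.mem_Icc.2 ⟨le_refl 0, hπ.le⟩)
      (Set.mem_Icc.2 ⟨h2πη.le, h2πηπ⟩) h2πη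
    rw [Real.cos_zero] at this
    rw [hκdef]; linarith
  have hκ2 : κ ≤ 2 := by
    have := Real.neg_one_le_cos (2 * Real.pi * η)
    rw [hκdef]; linarith
  set ε : ℝ := νN 1 * bmin * κ with hεdef
  have hε0 : 0 < ε := mul_pos (mul_pos ha hbmin) hκ0
  have hε2 : ε ≤ 1/2 := by
    set j0 : Fin m := ⟨0, hm⟩
    have h1g : (1 : Γ) ≠ gee ψ j0 := fun h => gee_ne_one ψ hm j0 h.symm
    have hab1 : νN 1 + νN (gee ψ j0) ≤ 1 := by
      have := Summable.sum_le_tsum ({1, gee ψ j0} : Finset Γ) (fun i _ => hνNp.1 i) hνNp.2.summable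
      rw [hνNp.2.tsum_eq, Finset.sum_pair h1g] at this
      exact this
    have hb0 := hbmin_le j0
    have habmin : 0 ≤ νN 1 * bmin := mul_nonneg ha.le hbmin.le
    have h4 : νN 1 * bmin ≤ 1/4 := by
      nlinarith [sq_nonneg (νN 1 - νN (gee ψ j0)), mul_le_mul_of_nonneg_left hb0 ha.le]
    rw [hεdef]
    nlinarith [habmin, h4, hκ0.le, hκ2]
  set L : ℝ := 1 - ε with hLdef
  have hL0 : 0 < L := by rw [hLdef]; linarith
  have hL1 : L < 1 := by rw [hLdef]; linarith
  -- the key uniform contraction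
  have hcontract : ∀ v : Fin m → ℝ, (∀ i, -(1/2) ≤ v i ∧ v i < 1/2) → (∃ i, δ ≤ |v i|) →
      ∀ (f : Γ → ℂ) (B : ℝ), (∀ y ∈ R.Δ, ‖f y‖ ≤ B) →
      ∀ y ∈ R.Δ, ‖transferOp ψ R νN v f y‖ ≤ L * B := by
    intro v hv1 hv2 f B hf y hy
    obtain ⟨j, hj⟩ := exists_good_index ψ R hN δ y hy v hv1 hv2 η hη0 (hηK y hy)
    have hcos := cos_bound (vip ψ R v y (gee ψ j)) η hη0 hη3 hj
    have hstep := contract_step ψ R hN hνNp (gee ψ j) (gee_mem ψ j) (gee_ne_one ψ hm j)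
      hf v y hy
    have hB0 : 0 ≤ B := le_trans (norm_nonneg _) (hf y hy)
    refine le_trans hstep (mul_le_mul_of_nonneg_right ?_ hB0)
    have h1 : νN 1 * bmin ≤ νN 1 * νN (gee ψ j) :=
      mul_le_mul_of_nonneg_left (hbmin_le j) ha.le
    have h2 : κ ≤ 1 - Real.cos (2 * Real.pi * vip ψ R v y (gee ψ j)) := by
      rw [hκdef]; linarith
    have h3 : ε ≤ νN 1 * νN (gee ψ j) *
        (1 - Real.cos (2 * Real.pi * vip ψ R v y (gee ψ j))) := by
      rw [hεdef]
      exact mul_le_mul h1 h2 hκ0.le (mul_nonneg ha.le (hνNp.1 _))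
    rw [hLdef]
    linarith
  -- constants
  set c : ℝ := -Real.log L / N with hcdef
  have hNpos : (0:ℝ) < (N:ℝ) := by exact_mod_cast hN1
  have hc0 : 0 < c := div_pos (neg_pos.2 (Real.log_neg hL0 hL1)) hNpos
  have hcN : c * N = -Real.log L := by
    rw [hcdef, div_mul_cancel₀ _ (ne_of_gt hNpos)]
  refine ⟨c, Real.exp (c * N), hc0, Real.exp_pos _, ?_⟩
  intro n x hx v hv1 hv2
  set f₀ : Γ → ℂ := fun z => if z = x then 1 else 0 with hf₀def
  have hf₀ : ∀ y ∈ R.Δ, ‖f₀ y‖ ≤ 1 := by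
    intro y _
    rw [hf₀def]
    by_cases h : y = x <;> simp [h]
  have hrem : ∀ (r : ℕ) (g : Γ → ℂ) (B : ℝ), (∀ y ∈ R.Δ, ‖g y‖ ≤ B) →
      ∀ y ∈ R.Δ, ‖(transferOp ψ R μ v)^[r] g y‖ ≤ B := by
    intro r
    induction r with
    | zero => intro g B hg y hy; simpa using hg y hy
    | succ r ih =>
      intro g B hg y hy
      rw [Function.iterate_succ_apply]
      exact ih _ B (fun z _ => op_bound ψ R hμ hg v z) y hy
  have hmult : ∀ q : ℕ, ∀ y ∈ R.Δ, ‖(transferOp ψ R μ v)^[q * N] f₀ y‖ ≤ L ^ q := by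
    intro q
    induction q with
    | zero =>
      intro y hy
      rw [Nat.zero_mul, Function.iterate_zero_apply, pow_zero]
      exact hf₀ y hy
    | succ q ih =>
      intro y hy
      rw [show (q + 1) * N = N + q * N by ring, Function.iterate_add_apply]
      set g := (transferOp ψ R μ v)^[q * N] f₀ with hg
      have heq : (transferOp ψ R μ v)^[N] g y = transferOp ψ R (convPow μ N) v g y := by
        have hN' : N = (N - 1) + 1 := by omega
        rw [hN']
        exact transferOp_iterate ψ R hμ v (N - 1) g ih y
      rw [heq]
      calc ‖transferOp ψ R (convPow μ N) v g y‖ ≤ L * L ^ q :=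
            hcontract v hv1 hv2 g (L ^ q) ih y hy
        _ = L ^ (q + 1) := by ring
  set q := n / N with hq
  set r := n % N with hr
  have hn : r + q * N = n := Nat.mod_add_div' n N
  have hbound : ‖(transferOp ψ R μ v)^[n] f₀ 1‖ ≤ L ^ q := by
    rw [← hn, Function.iterate_add_apply]
    exact hrem r _ (L ^ q) (hmult q) 1 R.one_mem
  refine le_trans hbound ?_
  -- arithmetic
  have hrN : r < N := Nat.mod_lt n (by omega)
  have hqn : (n : ℝ) = r + q * N := by exact_mod_cast hn.symm
  have hLq : L ^ q = Real.exp ((q : ℝ) * Real.log L) := by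
    rw [Real.exp_nat_mul, Real.exp_log hL0]
  rw [hLq, show Real.exp (c * N) * Real.exp (-c * n) = Real.exp (c * N + -c * n) by
    rw [Real.exp_add]]
  refine Real.exp_le_exp.2 ?_
  have hlogL : Real.log L = -(c * N) := by rw [hcN]; ring
  rw [hlogL]
  have hrN' : (r : ℝ) ≤ (N : ℝ) := by exact_mod_cast hrN.le
  have h0 : 0 ≤ c * ((N : ℝ) - r) := mul_nonneg hc0.le (by linarith)
  nlinarith [hc0.le]


end NSVA
end

section
/- Let ν be a non-degenerate probability measure on Γ₁×Γ₂ with finite second moment, and let μ^{(1)}(γ₁) := ∑_{γ₂} ν(γ₁,γ₂) be its first marginal (which is non-degenerate on Γ₁). Let v₁ ∈ ℝ^{m₁} and set 𝐯₁ := (v₁, 0) ∈ ℝ^{m₁}×ℝ^{m₂}. If v̂₁ = u₁ + df₁ is a harmonic decomposition of the 1-form v̂₁(x₁,s₁) := ⟨v₁, α₁(x₁,s₁)⟩ with respect to (Γ₁, μ^{(1)}, Δ₁), then the 1-form 𝐯̂₁((x₁,x₂),(s₁,s₂)) := ⟨𝐯₁, α((x₁,x₂),(s₁,s₂))⟩ admits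 the harmonic decomposition 𝐯̂₁ = 𝐮₁ + d𝐟₁ with respect to (Γ₁×Γ₂, ν, Δ₁×Δ₂), where 𝐮₁((x₁,x₂),(s₁,s₂)) := u₁(x₁,s₁) and 𝐟₁(x₁,x₂) := f₁(x₁); in particular 𝐮₁ is harmonic and is the harmonic part of 𝐯̂₁. -/
open scoped BigOperators Classical
open Filter Matrix MeasureTheory

namespace NSVA

section Aux

variable {G : Type*} [Group G]

/-- Cardinality of a representative system equals the index. -/
lemma repSystem_card {Λ : Subgroup G} (hN : Λ.Normal) (R : RepSystem Λ) :
    R.Δ.card = Λ.index := by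
  have hinj : Function.Injective (fun x : {y // y ∈ R.Δ} => ((x : G) : G ⧸ Λ)) := by
    rintro ⟨x, hx⟩ ⟨y, hy⟩ h
    have hmem : x⁻¹ * y ∈ Λ := (QuotientGroup.eq).mp h
    have hv : y * x⁻¹ ∈ Λ := by
      have := hN.conj_mem _ hmem x
      simpa [mul_assoc] using this
    have : R.rep ((y * x⁻¹) * x) = R.rep x := R.rep_coset x _ hv
    simp only [inv_mul_cancel_right] at this
    rw [R.rep_idem y hy, R.rep_idem x hx] at this
    exact Subtype.ext this.symm
  have hsurj : Function.Surjective (fun x : {y // y ∈ R.Δ} => ((x : G) : G ⧸ Λ)) := by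
    intro q
    induction q using QuotientGroup.induction_on with
    | H γ =>
      refine ⟨⟨R.rep γ, R.rep_mem γ⟩, ?_⟩
      have h1 : γ * (R.rep γ)⁻¹ ∈ Λ := R.rep_spec γ
      have h2 : (R.rep γ)⁻¹ * γ ∈ Λ := by
        have := hN.conj_mem _ h1 (R.rep γ)⁻¹
        simpa [mul_assoc] using this
      exact (QuotientGroup.eq).mpr h2
  have : Nat.card {y // y ∈ R.Δ} = Nat.card (G ⧸ Λ) :=
    Nat.card_congr (Equiv.ofBijective _ ⟨hinj, hsurj⟩)
  rw [Subgroup.index_eq_card, ← this, Nat.card_eq_finsetCard]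

end Aux

set_option maxHeartbeats 1000000 in
/-- The harmonic decomposition of `v̂₁` with respect to the first
marginal lifts to a harmonic decomposition of `(v₁,0)^` on the product diagram. -/
theorem harmonic_part_of_product_lift
    {Γ₁ : Type*} [Group Γ₁] [Countable Γ₁] {Γ₂ : Type*} [Group Γ₂] [Countable Γ₂]
    {Λ₁ : Subgroup Γ₁} {Λ₂ : Subgroup Γ₂} (hN₁ : Λ₁.Normal) (hN₂ : Λ₂.Normal)
    (hI₁ : Λ₁.index ≠ 0) (hI₂ : Λ₂.index ≠ 0)
    {m₁ m₂ : ℕ} (hm₁ : 1 ≤ m₁) (hm₂ : 1 ≤ m₂)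
    (ψ₁ : Λ₁ ≃* Multiplicative (Fin m₁ → ℤ)) (ψ₂ : Λ₂ ≃* Multiplicative (Fin m₂ → ℤ))
    (R₁ : RepSystem Λ₁) (R₂ : RepSystem Λ₂)
    (ν : Γ₁ × Γ₂ → ℝ) (hν : IsProb ν) (hnd : Nondeg ν) (hmom : FinSecondMoment ν)
    (v₁ : Fin m₁ → ℝ) (u₁ : Γ₁ → Γ₁ → ℝ) (f₁ : Γ₁ → ℝ)
    (hdec : IsHarmDecomp R₁ (marg1 ν) (vhat ψ₁ R₁ v₁) u₁ f₁) :
    Nondeg (marg1 ν) ∧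
    IsHarmDecomp (prodRep R₁ R₂) ν (vhat2 ψ₁ R₁ ψ₂ R₂ (v₁, 0))
      (fun x s => u₁ x.1 s.1) (fun x => f₁ x.1) := by
  classical
  obtain ⟨hpos, hsum⟩ := hν
  have hνsummable : Summable ν := hsum.summable
  have hm1nonneg : ∀ g : Γ₁, 0 ≤ marg1 ν g := fun g =>
    tsum_nonneg (fun h => hpos (g, h))
  have hm1summand : ∀ g : Γ₁, Summable (fun h : Γ₂ => ν (g, h)) :=
    fun g => hνsummable.prod_factor g
  -- Nondegeneracy of the first marginal
  have hNondeg : Nondeg (marg1 ν) := by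
    intro g
    have key : ∀ p : Γ₁ × Γ₂, p ∈ Subsemigroup.closure {x : Γ₁ × Γ₂ | 0 < ν x} →
        p.1 ∈ Subsemigroup.closure {x : Γ₁ | 0 < marg1 ν x} := by
      intro p hp
      induction hp using Subsemigroup.closure_induction with
      | mem q hq =>
        apply Subsemigroup.subset_closure
        have : ν (q.1, q.2) ≤ marg1 ν q.1 :=
          Summable.le_tsum (hm1summand q.1) q.2 (fun h _ => hpos (q.1, h))
        exact lt_of_lt_of_le hq this
      | mul a b _ _ ha hb => exact mul_mem ha hb
    exact key (g, 1) (hnd (g, 1))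
  obtain ⟨hu1form, ⟨hu1sq, hu1harm⟩, hu1dec⟩ := hdec
  -- basic summability facts
  have hsq : ∀ x₁ ∈ R₁.Δ, Summable (fun s₁ : Γ₁ => marg1 ν s₁ * u₁ x₁ s₁ ^ 2) := by
    intro x₁ hx₁
    have h := (hu1sq x₁ hx₁).mul_left (Λ₁.index : ℝ)
    have : (fun s₁ : Γ₁ => (Λ₁.index : ℝ) * (marg1 ν s₁ / (Λ₁.index : ℝ) * u₁ x₁ s₁ ^ 2))
        = fun s₁ => marg1 ν s₁ * u₁ x₁ s₁ ^ 2 := by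
      funext s₁
      field_simp
    rwa [this] at h
  have hIQ : ∀ x₁ ∈ R₁.Δ, Summable (fun s : Γ₁ × Γ₂ => ν s * u₁ x₁ s.1 ^ 2) := by
    intro x₁ hx₁
    rw [summable_prod_of_nonneg (fun p => mul_nonneg (hpos p) (sq_nonneg _))]
    constructor
    · intro s₁
      exact ((hm1summand s₁).mul_right (u₁ x₁ s₁ ^ 2)).congr (fun y => rfl)
    · have : (fun s₁ : Γ₁ => ∑' s₂ : Γ₂, ν (s₁, s₂) * u₁ x₁ s₁ ^ 2)
          = fun s₁ => marg1 ν s₁ * u₁ x₁ s₁ ^ 2 := by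
        funext s₁
        rw [tsum_mul_right]
        rfl
      rw [this]
      exact hsq x₁ hx₁
  have hL : ∀ x₁ ∈ R₁.Δ, Summable (fun s : Γ₁ × Γ₂ => ν s * u₁ x₁ s.1) := by
    intro x₁ hx₁
    apply Summable.of_abs
    apply Summable.of_nonneg_of_le (fun s => abs_nonneg _)
      (f := fun s => (ν s + ν s * u₁ x₁ s.1 ^ 2) / 2)
    · intro s
      have h1 : |ν s * u₁ x₁ s.1| = ν s * |u₁ x₁ s.1| := by
        rw [abs_mul, abs_of_nonneg (hpos s)]
      rw [h1]
      have h2 : |u₁ x₁ s.1| ≤ (1 + u₁ x₁ s.1 ^ 2) / 2 := by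
        nlinarith [sq_nonneg (|u₁ x₁ s.1| - 1), sq_abs (u₁ x₁ s.1)]
      calc ν s * |u₁ x₁ s.1| ≤ ν s * ((1 + u₁ x₁ s.1 ^ 2) / 2) :=
            mul_le_mul_of_nonneg_left h2 (hpos s)
        _ = (ν s + ν s * u₁ x₁ s.1 ^ 2) / 2 := by ring
    · exact (hνsummable.add (hIQ x₁ hx₁)).div_const 2
  have hLm : ∀ x₁ ∈ R₁.Δ, Summable (fun s₁ : Γ₁ => marg1 ν s₁ * u₁ x₁ s₁) := by
    intro x₁ hx₁
    apply Summable.of_abs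
    apply Summable.of_nonneg_of_le (fun s => abs_nonneg _)
      (f := fun s₁ => (marg1 ν s₁ + marg1 ν s₁ * u₁ x₁ s₁ ^ 2) / 2)
    · intro s₁
      have h1 : |marg1 ν s₁ * u₁ x₁ s₁| = marg1 ν s₁ * |u₁ x₁ s₁| := by
        rw [abs_mul, abs_of_nonneg (hm1nonneg s₁)]
      rw [h1]
      have h2 : |u₁ x₁ s₁| ≤ (1 + u₁ x₁ s₁ ^ 2) / 2 := by
        nlinarith [sq_nonneg (|u₁ x₁ s₁| - 1), sq_abs (u₁ x₁ s₁)]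
      calc marg1 ν s₁ * |u₁ x₁ s₁| ≤ marg1 ν s₁ * ((1 + u₁ x₁ s₁ ^ 2) / 2) :=
            mul_le_mul_of_nonneg_left h2 (hm1nonneg s₁)
        _ = (marg1 ν s₁ + marg1 ν s₁ * u₁ x₁ s₁ ^ 2) / 2 := by ring
    · have hmsum : Summable (marg1 ν) := by
        rw [summable_prod_of_nonneg (fun p => hpos p)] at hνsummable
        exact hνsummable.2.congr (fun s₁ => rfl)
      exact (hmsum.add (hsq x₁ hx₁)).div_const 2
  have htsum_eq : ∀ x₁ ∈ R₁.Δ, (∑' s : Γ₁ × Γ₂, ν s * u₁ x₁ s.1)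
      = ∑' s₁ : Γ₁, marg1 ν s₁ * u₁ x₁ s₁ := by
    intro x₁ hx₁
    rw [Summable.tsum_prod (hL x₁ hx₁)]
    congr 1
    funext s₁
    have h : (∑' c : Γ₂, ν (s₁, c) * u₁ x₁ s₁) = marg1 ν s₁ * u₁ x₁ s₁ := by
      rw [tsum_mul_right]; rfl
    exact h
  -- index and cardinality facts
  have hIprod : ((Λ₁.prod Λ₂).index : ℝ) = (Λ₁.index : ℝ) * (Λ₂.index : ℝ) := by
    rw [Subgroup.index_prod]
    push_cast
    ring
  have hcard₂ : (R₂.Δ.card : ℝ) = (Λ₂.index : ℝ) := by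
    exact_mod_cast repSystem_card hN₂ R₂
  have hI₁' : (Λ₁.index : ℝ) ≠ 0 := Nat.cast_ne_zero.mpr hI₁
  have hI₂' : (Λ₂.index : ℝ) ≠ 0 := Nat.cast_ne_zero.mpr hI₂
  -- chi of the lifted form equals chi of u₁
  have hchi : chi (prodRep R₁ R₂) ν (fun x s => u₁ x.1 s.1) = chi R₁ (marg1 ν) u₁ := by
    unfold chi prodRep
    simp only
    rw [Finset.sum_product]
    have step : ∀ x₁ ∈ R₁.Δ, ∀ x₂ ∈ R₂.Δ,
        (∑' s : Γ₁ × Γ₂, ν s / ((Λ₁.prod Λ₂).index : ℝ) * u₁ x₁ s.1)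
        = ((Λ₁.prod Λ₂).index : ℝ)⁻¹ * ∑' s₁ : Γ₁, marg1 ν s₁ * u₁ x₁ s₁ := by
      intro x₁ hx₁ x₂ _
      rw [← htsum_eq x₁ hx₁, ← tsum_mul_left]
      congr 1
      funext s
      field_simp
    calc ∑ x₁ ∈ R₁.Δ, ∑ x₂ ∈ R₂.Δ,
          ∑' s : Γ₁ × Γ₂, ν s / ((Λ₁.prod Λ₂).index : ℝ) * u₁ x₁ s.1
        = ∑ x₁ ∈ R₁.Δ, ∑ x₂ ∈ R₂.Δ,
          ((Λ₁.prod Λ₂).index : ℝ)⁻¹ * ∑' s₁ : Γ₁, marg1 ν s₁ * u₁ x₁ s₁ := by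
          apply Finset.sum_congr rfl
          intro x₁ hx₁
          exact Finset.sum_congr rfl (fun x₂ hx₂ => step x₁ hx₁ x₂ hx₂)
      _ = ∑ x₁ ∈ R₁.Δ, (Λ₁.index : ℝ)⁻¹ * ∑' s₁ : Γ₁, marg1 ν s₁ * u₁ x₁ s₁ := by
          apply Finset.sum_congr rfl
          intro x₁ _
          rw [Finset.sum_const, nsmul_eq_mul, hIprod]
          rw [hcard₂]
          field_simp
      _ = ∑ x₁ ∈ R₁.Δ, ∑' s₁ : Γ₁, marg1 ν s₁ / (Λ₁.index : ℝ) * u₁ x₁ s₁ := by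
          apply Finset.sum_congr rfl
          intro x₁ _
          rw [← tsum_mul_left]
          congr 1
          funext s₁
          field_simp
  refine ⟨hNondeg, ?_, ⟨?_, ?_⟩, ?_⟩
  · -- one form
    intro x hx s
    rcases Finset.mem_product.mp hx with ⟨hx₁, _⟩
    exact hu1form x.1 hx₁ s.1
  · -- square integrable
    intro x hx
    rcases Finset.mem_product.mp hx with ⟨hx₁, _⟩
    have h := (hIQ x.1 hx₁).mul_left ((Λ₁.prod Λ₂).index : ℝ)⁻¹
    apply h.congr
    intro s
    field_simp
  · -- harmonicity
    intro x hx
    rcases Finset.mem_product.mp hx with ⟨hx₁, _⟩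
    rw [hchi, htsum_eq x.1 hx₁]
    exact hu1harm x.1 hx₁
  · -- decomposition
    intro x hx s
    rcases Finset.mem_product.mp hx with ⟨hx₁, _⟩
    have h := hu1dec x.1 hx₁ s.1
    have hv : vhat2 ψ₁ R₁ ψ₂ R₂ (v₁, 0) x s = vhat ψ₁ R₁ v₁ x.1 s.1 := by
      unfold vhat2 vhat
      simp
    rw [hv, h]
    rfl


end NSVA
end

section
/- Let d ≥ 1 and let Σ and Σ' be symmetric positive-definite d×d real matrices. Then lim_{n→∞} ∑_{w∈ℤ^d} |ξ_{nΣ}(w) − ξ_{nΣ'}(w)| = ∫_{ℝ^d} |ξ_Σ(w) − ξ_{Σ'}(w)| dw, where the integral is with respect to Lebesgue measure on ℝ^d. -/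
open scoped BigOperators Classical
open Filter Matrix MeasureTheory

namespace NSVA

lemma quad_lb {d : ℕ} (hd : 1 ≤ d) {M : Matrix (Fin d) (Fin d) ℝ} (hM : M.PosDef) :
    ∃ c > 0, ∀ x : Fin d → ℝ, c * ∑ i, x i ^ 2 ≤ x ⬝ᵥ M.mulVec x := by
  have hq : Continuous fun x : Fin d → ℝ => x ⬝ᵥ M.mulVec x := by
    apply continuous_finset_sum
    intro i _
    simp only [Matrix.mulVec, dotProduct]
    exact (continuous_apply i).mul
      (continuous_finset_sum _ fun j _ => continuous_const.mul (continuous_apply j))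
  have hcont : Continuous fun x : Fin d → ℝ => ∑ i, x i ^ 2 :=
    continuous_finset_sum _ fun i _ => (continuous_apply i).pow 2
  set S : Set (Fin d → ℝ) := {x | ∑ i, x i ^ 2 = 1} with hS
  have hclosed : IsClosed S := isClosed_eq hcont continuous_const
  have hbdd : Bornology.IsBounded S := by
    apply Bornology.IsBounded.subset (Metric.isBounded_closedBall (x := (0 : Fin d → ℝ)) (r := 1))
    intro x hx
    simp only [Metric.mem_closedBall, dist_zero_right]
    rw [pi_norm_le_iff_of_nonneg (by norm_num)]
    intro i
    have h1 : x i ^ 2 ≤ 1 := by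
      rw [← hx]
      exact Finset.single_le_sum (fun j _ => sq_nonneg (x j)) (Finset.mem_univ i)
    rw [Real.norm_eq_abs]
    nlinarith [abs_nonneg (x i), sq_abs (x i)]
  have hcompact : IsCompact S := Metric.isCompact_of_isClosed_isBounded hclosed hbdd
  have hne : S.Nonempty := by
    refine ⟨Pi.single ⟨0, hd⟩ 1, ?_⟩
    simp only [hS, Set.mem_setOf_eq]
    rw [Finset.sum_eq_single ⟨0, hd⟩]
    · simp
    · intro j _ hj; simp [Pi.single_apply, hj]
    · simp
  obtain ⟨z, hzS, hz⟩ := hcompact.exists_isMinOn hne hq.continuousOn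
  have hzne : z ≠ 0 := by
    intro h
    rw [hS, Set.mem_setOf_eq, h] at hzS
    simp at hzS
  have hc : 0 < z ⬝ᵥ M.mulVec z := by simpa using hM.dotProduct_mulVec_pos hzne
  refine ⟨z ⬝ᵥ M.mulVec z, hc, fun x => ?_⟩
  by_cases hx : x = 0
  · simp [hx]
  · have hsum : 0 < ∑ i, x i ^ 2 := by
      obtain ⟨i, hi⟩ := Function.ne_iff.mp hx
      have : 0 < x i ^ 2 := pow_pos (abs_pos.mpr hi) 2 |>.trans_eq (by rw [sq_abs]) |>.trans_le le_rfl
      exact Finset.sum_pos' (fun j _ => sq_nonneg _) ⟨i, Finset.mem_univ i, this⟩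
    set r : ℝ := Real.sqrt (∑ i, x i ^ 2) with hr
    have hrpos : 0 < r := Real.sqrt_pos.mpr hsum
    have hr2 : r ^ 2 = ∑ i, x i ^ 2 := Real.sq_sqrt hsum.le
    set u : Fin d → ℝ := r⁻¹ • x with hu
    have huS : u ∈ S := by
      simp only [hS, Set.mem_setOf_eq, hu, Pi.smul_apply, smul_eq_mul, mul_pow,
        ← Finset.mul_sum]
      rw [← hr2]
      field_simp
    have hxu : x = r • u := by
      rw [hu, smul_smul, mul_inv_cancel₀ hrpos.ne', one_smul]
    have hqx : x ⬝ᵥ M.mulVec x = r ^ 2 * (u ⬝ᵥ M.mulVec u) := by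
      rw [hxu]
      simp [smul_dotProduct, Matrix.mulVec_smul, dotProduct_smul, smul_eq_mul]
      ring
    rw [hqx, ← hr2]
    have := hz huS
    simp only [Set.mem_setOf_eq] at this
    nlinarith [this]


lemma gauss_pos {d : ℕ} {A : Matrix (Fin d) (Fin d) ℝ} (hp : A.PosDef) (w : Fin d → ℝ) :
    0 < gauss A w := by
  have h1 : (0:ℝ) < (2 * Real.pi) ^ (-(d : ℝ) / 2) :=
    Real.rpow_pos_of_pos (by positivity) _
  have h2 : (0:ℝ) < A.det ^ (-(1 : ℝ) / 2) := Real.rpow_pos_of_pos hp.det_pos _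
  exact mul_pos (mul_pos h1 h2) (Real.exp_pos _)

lemma gauss_cont {d : ℕ} (A : Matrix (Fin d) (Fin d) ℝ) : Continuous (gauss A) := by
  apply Continuous.mul continuous_const
  apply Real.continuous_exp.comp
  apply Continuous.div_const
  apply Continuous.neg
  apply continuous_finset_sum
  intro i _
  simp only [Matrix.mulVec, dotProduct]
  exact (continuous_apply i).mul
    (continuous_finset_sum _ fun j _ => continuous_const.mul (continuous_apply j))

lemma gauss_scale {d : ℕ} {A : Matrix (Fin d) (Fin d) ℝ} (hp : A.PosDef) {n : ℕ}
    (hn : 1 ≤ n) (x : Fin d → ℝ) :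
    gauss ((n:ℝ) • A) x = ((Real.sqrt n)⁻¹)^d * gauss A ((Real.sqrt n)⁻¹ • x) := by
  have ht : (0:ℝ) < n := by exact_mod_cast hn
  have hdet : IsUnit A.det := hp.det_pos.ne'.isUnit
  haveI : Invertible ((n:ℝ)) := invertibleOfNonzero ht.ne'
  have hinv : ((n:ℝ) • A)⁻¹ = (n:ℝ)⁻¹ • A⁻¹ := by
    rw [Matrix.inv_smul (k := (n:ℝ)) (A := A) hdet, invOf_eq_inv]
  have hquad : x ⬝ᵥ ((n:ℝ) • A)⁻¹.mulVec x
      = ((Real.sqrt n)⁻¹ • x) ⬝ᵥ A⁻¹.mulVec ((Real.sqrt n)⁻¹ • x) := by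
    rw [hinv]
    have hs : ((Real.sqrt n)⁻¹) * ((Real.sqrt n)⁻¹) = (n:ℝ)⁻¹ := by
      rw [← mul_inv]
      rw [Real.mul_self_sqrt ht.le]
    simp only [Matrix.smul_mulVec, Matrix.mulVec_smul, dotProduct_smul,
      smul_dotProduct, smul_eq_mul]
    rw [← hs]; ring
  have hdetp : ((n:ℝ) • A).det = (n:ℝ)^d * A.det := by
    rw [Matrix.det_smul]; simp
  unfold gauss
  rw [hquad, hdetp, Real.mul_rpow (by positivity) hp.det_pos.le]
  have hpre : ((n:ℝ)^d : ℝ) ^ (-(1:ℝ)/2) = ((Real.sqrt n)⁻¹)^d := by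
    rw [← Real.rpow_natCast ((n:ℝ)) d, ← Real.rpow_mul ht.le]
    rw [inv_pow, ← Real.rpow_natCast (Real.sqrt n) d, Real.sqrt_eq_rpow,
      ← Real.rpow_mul ht.le, ← Real.rpow_neg ht.le]
    ring_nf
  rw [hpre]; ring

lemma riemann_eq {d : ℕ} (F : (Fin d → ℝ) → ℝ) (hF : Continuous F)
    {c : ℝ} (hc : 0 < c)
    (hInt : Integrable (fun y : Fin d → ℝ => F (fun i => (⌊c * y i⌋ : ℝ) / c))) :
    ∑' w : Fin d → ℤ, (c⁻¹)^d * F (fun i => (w i : ℝ) / c)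
      = ∫ y : Fin d → ℝ, F (fun i => (⌊c * y i⌋ : ℝ) / c) := by
  set s : (Fin d → ℤ) → Set (Fin d → ℝ) :=
    fun w => {y | ∀ i, ⌊c * y i⌋ = w i} with hs
  have hmem : ∀ w y, y ∈ s w ↔ ∀ i, ⌊c * y i⌋ = w i := fun w y => Iff.rfl
  have hseq : ∀ w, s w = Set.pi Set.univ
      (fun i => Set.Ico ((w i : ℝ)/c) (((w i : ℝ) + 1)/c)) := by
    intro w
    ext y
    simp only [hs, Set.mem_setOf_eq, Set.mem_pi, Set.mem_univ, Set.mem_Ico, forall_true_left]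
    refine forall_congr' fun i => ?_
    rw [Int.floor_eq_iff]
    rw [div_le_iff₀ hc, lt_div_iff₀ hc]
    constructor
    · rintro ⟨h1, h2⟩; exact ⟨by linarith [mul_comm c (y i)], by linarith [mul_comm c (y i)]⟩
    · rintro ⟨h1, h2⟩; exact ⟨by linarith [mul_comm c (y i)], by linarith [mul_comm c (y i)]⟩
  have hm : ∀ w, MeasurableSet (s w) := by
    intro w; rw [hseq w]
    exact MeasurableSet.univ_pi fun i => measurableSet_Ico
  have hdisj : Pairwise (Function.onFun Disjoint s) := by
    intro w w' hww
    rw [Function.onFun, Set.disjoint_left]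
    intro y hy hy'
    exact hww (funext fun i => (hy i).symm.trans (hy' i))
  have hunion : (⋃ w, s w) = Set.univ := by
    ext y
    simp only [Set.mem_iUnion, Set.mem_univ, iff_true]
    exact ⟨fun i => ⌊c * y i⌋, fun i => rfl⟩
  have hvol : ∀ w, volume (s w) = ENNReal.ofReal (1/c) ^ d := by
    intro w
    rw [hseq w, volume_pi_pi]
    have : ∀ i : Fin d, volume (Set.Ico ((w i : ℝ)/c) (((w i : ℝ) + 1)/c))
        = ENNReal.ofReal (1/c) := by
      intro i
      rw [Real.volume_Ico]
      congr 1
      field_simp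
      ring
    simp [this]
  have hstep : ∀ w, (∫ y in s w, F (fun i => (⌊c * y i⌋ : ℝ) / c))
      = (c⁻¹)^d * F (fun i => (w i : ℝ) / c) := by
    intro w
    have : ∀ y ∈ s w, F (fun i => (⌊c * y i⌋ : ℝ) / c) = F (fun i => (w i : ℝ) / c) := by
      intro y hy
      congr 1
      funext i
      rw [hy i]
    rw [setIntegral_congr_fun (hm w) this, setIntegral_const, measureReal_def, hvol w]
    rw [smul_eq_mul]
    congr 1
    rw [ENNReal.toReal_pow, ENNReal.toReal_ofReal (by positivity)]
    rw [one_div]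
  have hsum := hasSum_integral_iUnion (μ := volume) hm hdisj
    (by rw [hunion]; exact hInt.integrableOn)
  rw [hunion] at hsum
  rw [Measure.restrict_univ] at hsum
  have := hsum.tsum_eq
  rw [← this]
  exact tsum_congr fun w => (hstep w).symm

lemma coord_sq {a b : ℝ} (h : |a - b| ≤ 1) : b ^ 2 / 2 - 2 ≤ a ^ 2 := by
  obtain ⟨h1, h2⟩ := abs_le.mp h
  nlinarith [sq_nonneg (2*a - b)]

lemma floor_div_close {c t : ℝ} (hc : 1 ≤ c) : |(⌊c * t⌋ : ℝ) / c - t| ≤ 1 := by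
  have hcpos : (0:ℝ) < c := lt_of_lt_of_le one_pos hc
  have heq : (⌊c * t⌋ : ℝ) / c - t = ((⌊c * t⌋ : ℝ) - c * t) / c := by field_simp
  rw [heq, abs_div, abs_of_pos hcpos]
  apply div_le_one_of_le₀ _ hcpos.le
  have f1 : (⌊c * t⌋ : ℝ) ≤ c * t := Int.floor_le _
  have f2 : c * t - 1 < (⌊c * t⌋ : ℝ) := Int.sub_one_lt_floor _
  rw [abs_le]
  constructor <;> [linarith; linarith]

lemma step_bound {d : ℕ} {F : (Fin d → ℝ) → ℝ} {C₀ c₀ : ℝ} (hc₀ : 0 < c₀) (hC₀ : 0 < C₀)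
    (hFb : ∀ x, F x ≤ C₀ * Real.exp (-(c₀ * ∑ i, x i ^ 2)))
    {c : ℝ} (hc : 1 ≤ c) (y : Fin d → ℝ) :
    F (fun i => (⌊c * y i⌋ : ℝ) / c) ≤
      (C₀ * Real.exp (2 * c₀ * d)) * Real.exp (-(c₀/2 * ∑ i, y i ^ 2)) := by
  have hsum : (∑ i, y i ^ 2) / 2 - 2 * d ≤ ∑ i, ((⌊c * y i⌋ : ℝ) / c) ^ 2 := by
    have : ∀ i : Fin d, y i ^ 2 / 2 - 2 ≤ ((⌊c * y i⌋ : ℝ) / c) ^ 2 :=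
      fun i => coord_sq (floor_div_close hc)
    calc (∑ i, y i ^ 2) / 2 - 2 * d = ∑ i : Fin d, (y i ^ 2 / 2 - 2) := by
          rw [Finset.sum_sub_distrib, ← Finset.sum_div]
          simp [Finset.card_univ]
          ring
      _ ≤ _ := Finset.sum_le_sum fun i _ => this i
  calc F (fun i => (⌊c * y i⌋ : ℝ) / c)
      ≤ C₀ * Real.exp (-(c₀ * ∑ i, ((⌊c * y i⌋ : ℝ) / c) ^ 2)) := hFb _
    _ ≤ C₀ * Real.exp (-(c₀ * ((∑ i, y i ^ 2) / 2 - 2 * d))) := by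
        apply mul_le_mul_of_nonneg_left _ hC₀.le
        rw [Real.exp_le_exp]
        have := mul_le_mul_of_nonneg_left hsum hc₀.le
        linarith
    _ = (C₀ * Real.exp (2 * c₀ * d)) * Real.exp (-(c₀/2 * ∑ i, y i ^ 2)) := by
        rw [mul_assoc, ← Real.exp_add]
        congr 2
        ring

lemma exp_sq_integrable {d : ℕ} {a : ℝ} (ha : 0 < a) :
    Integrable (fun y : Fin d → ℝ => Real.exp (-(a * ∑ i, y i ^ 2))) := by
  have heq : (fun y : Fin d → ℝ => Real.exp (-(a * ∑ i, y i ^ 2)))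
      = fun y => ∏ i, Real.exp (-a * y i ^ 2) := by
    funext y
    rw [← Real.exp_sum]
    congr 1
    rw [Finset.mul_sum]
    simp [neg_mul]
  rw [heq]
  exact Integrable.fintype_prod fun _ => integrable_exp_neg_mul_sq ha

lemma step_meas {d : ℕ} {F : (Fin d → ℝ) → ℝ} (hF : Continuous F) (c : ℝ) :
    Measurable fun y : Fin d → ℝ => F (fun i => (⌊c * y i⌋ : ℝ) / c) := by
  apply hF.measurable.comp
  apply measurable_pi_lambda
  intro i
  exact (measurable_from_top (f := fun z : ℤ => ((z : ℝ) / c))).comp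
    (Measurable.floor (by fun_prop : Measurable fun y : Fin d → ℝ => c * y i))

lemma step_tendsto {d : ℕ} {F : (Fin d → ℝ) → ℝ} (hF : Continuous F) (y : Fin d → ℝ) :
    Tendsto (fun n : ℕ =>
      F (fun i => (⌊Real.sqrt ((n:ℝ)+1) * y i⌋ : ℝ) / Real.sqrt ((n:ℝ)+1)))
      atTop (nhds (F y)) := by
  have hφ : Tendsto (fun n : ℕ =>
      (fun i => (⌊Real.sqrt ((n:ℝ)+1) * y i⌋ : ℝ) / Real.sqrt ((n:ℝ)+1)))
      atTop (nhds y) := by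
    rw [tendsto_pi_nhds]
    intro i
    apply tendsto_iff_dist_tendsto_zero.mpr
    have hb : Tendsto (fun n : ℕ => Real.sqrt (1 / ((n:ℝ)+1))) atTop (nhds 0) := by
      have := (Real.continuous_sqrt.tendsto' 0 0 (by simp)).comp
        tendsto_one_div_add_atTop_nhds_zero_nat
      exact this
    apply squeeze_zero (fun n => dist_nonneg) _ hb
    intro n
    have hc1 : (1:ℝ) ≤ Real.sqrt ((n:ℝ)+1) :=
      calc (1:ℝ) = Real.sqrt 1 := Real.sqrt_one.symm
        _ ≤ _ := Real.sqrt_le_sqrt (by linarith [Nat.cast_nonneg (α := ℝ) n])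
    have hcpos : (0:ℝ) < Real.sqrt ((n:ℝ)+1) := lt_of_lt_of_le one_pos hc1
    rw [Real.dist_eq]
    have heq : (⌊Real.sqrt ((n:ℝ)+1) * y i⌋ : ℝ) / Real.sqrt ((n:ℝ)+1) - y i
        = ((⌊Real.sqrt ((n:ℝ)+1) * y i⌋ : ℝ) - Real.sqrt ((n:ℝ)+1) * y i)
          / Real.sqrt ((n:ℝ)+1) := by field_simp
    have hnum : |(⌊Real.sqrt ((n:ℝ)+1) * y i⌋ : ℝ) - Real.sqrt ((n:ℝ)+1) * y i| ≤ 1 := by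
      have f1 : (⌊Real.sqrt ((n:ℝ)+1) * y i⌋ : ℝ) ≤ Real.sqrt ((n:ℝ)+1) * y i :=
        Int.floor_le _
      have f2 : Real.sqrt ((n:ℝ)+1) * y i - 1 < (⌊Real.sqrt ((n:ℝ)+1) * y i⌋ : ℝ) :=
        Int.sub_one_lt_floor _
      rw [abs_le]; constructor <;> linarith
    rw [heq, abs_div, abs_of_pos hcpos]
    have hrhs : Real.sqrt (1 / ((n:ℝ)+1)) = 1 / Real.sqrt ((n:ℝ)+1) := by
      rw [one_div, one_div, Real.sqrt_inv]
    rw [hrhs]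
    gcongr
  exact (hF.tendsto y).comp hφ

lemma gauss_le {d : ℕ} (hd : 1 ≤ d) {A : Matrix (Fin d) (Fin d) ℝ} (hp : A.PosDef) :
    ∃ C > 0, ∃ c > 0, ∀ x : Fin d → ℝ, gauss A x ≤ C * Real.exp (-(c * ∑ i, x i ^ 2)) := by
  obtain ⟨c, hc, hq⟩ := quad_lb hd hp.inv
  have hK : (0:ℝ) < (2 * Real.pi) ^ (-(d : ℝ) / 2) * A.det ^ (-(1 : ℝ) / 2) :=
    mul_pos (Real.rpow_pos_of_pos (by positivity) _) (Real.rpow_pos_of_pos hp.det_pos _)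
  refine ⟨_, hK, c/2, half_pos hc, fun x => ?_⟩
  unfold gauss
  apply mul_le_mul_of_nonneg_left _ hK.le
  rw [Real.exp_le_exp]
  have := hq x
  linarith

/-- The `ℓ¹(ℤ^d)` distance between the Gaussian densities `ξ_{nΣ}` and
`ξ_{nΣ'}` converges, as `n → ∞`, to the `L¹(ℝ^d)` distance between `ξ_Σ` and `ξ_{Σ'}`. -/
theorem gaussian_l1_limit
    {d : ℕ} (hd : 1 ≤ d) (Sig Sig' : Matrix (Fin d) (Fin d) ℝ)
    (hs : Sig.IsSymm) (hs' : Sig'.IsSymm) (hp : Sig.PosDef) (hp' : Sig'.PosDef) :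
    Tendsto (fun n : ℕ =>
        ∑' w : Fin d → ℤ,
          |gauss ((n : ℝ) • Sig) (fun i => (w i : ℝ)) -
            gauss ((n : ℝ) • Sig') (fun i => (w i : ℝ))|)
      atTop
      (nhds (∫ w : Fin d → ℝ, |gauss Sig w - gauss Sig' w|)) := by
  set F : (Fin d → ℝ) → ℝ := fun y => |gauss Sig y - gauss Sig' y| with hFdef
  have hFcont : Continuous F := ((gauss_cont Sig).sub (gauss_cont Sig')).abs
  obtain ⟨C1, hC1, c1, hc1, hb1⟩ := gauss_le hd hp
  obtain ⟨C2, hC2, c2, hc2, hb2⟩ := gauss_le hd hp'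
  set c₀ : ℝ := min c1 c2 with hc₀def
  have hc₀ : 0 < c₀ := lt_min hc1 hc2
  set C₀ : ℝ := C1 + C2 with hC₀def
  have hC₀ : 0 < C₀ := add_pos hC1 hC2
  have hFb : ∀ x, F x ≤ C₀ * Real.exp (-(c₀ * ∑ i, x i ^ 2)) := by
    intro x
    have hsq : (0:ℝ) ≤ ∑ i, x i ^ 2 := Finset.sum_nonneg fun i _ => sq_nonneg _
    have e1 : Real.exp (-(c1 * ∑ i, x i ^ 2)) ≤ Real.exp (-(c₀ * ∑ i, x i ^ 2)) := by
      rw [Real.exp_le_exp]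
      have := mul_le_mul_of_nonneg_right (min_le_left c1 c2) hsq
      simp only [hc₀def]; linarith
    have e2 : Real.exp (-(c2 * ∑ i, x i ^ 2)) ≤ Real.exp (-(c₀ * ∑ i, x i ^ 2)) := by
      rw [Real.exp_le_exp]
      have := mul_le_mul_of_nonneg_right (min_le_right c1 c2) hsq
      simp only [hc₀def]; linarith
    calc F x ≤ |gauss Sig x| + |gauss Sig' x| := abs_sub _ _
      _ = gauss Sig x + gauss Sig' x := by
          rw [abs_of_pos (gauss_pos hp x), abs_of_pos (gauss_pos hp' x)]
      _ ≤ C1 * Real.exp (-(c1 * ∑ i, x i ^ 2)) + C2 * Real.exp (-(c2 * ∑ i, x i ^ 2)) :=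
          add_le_add (hb1 x) (hb2 x)
      _ ≤ C1 * Real.exp (-(c₀ * ∑ i, x i ^ 2)) + C2 * Real.exp (-(c₀ * ∑ i, x i ^ 2)) :=
          add_le_add (mul_le_mul_of_nonneg_left e1 hC1.le)
            (mul_le_mul_of_nonneg_left e2 hC2.le)
      _ = C₀ * Real.exp (-(c₀ * ∑ i, x i ^ 2)) := by rw [hC₀def]; ring
  have hFnn : ∀ x, 0 ≤ F x := fun x => abs_nonneg _
  set D : (Fin d → ℝ) → ℝ :=
    fun y => (C₀ * Real.exp (2 * c₀ * d)) * Real.exp (-(c₀/2 * ∑ i, y i ^ 2)) with hDdef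
  have hDint : Integrable D := (exp_sq_integrable (half_pos hc₀)).const_mul _
  have hstepb : ∀ c : ℝ, 1 ≤ c → ∀ y,
      F (fun i => (⌊c * y i⌋ : ℝ) / c) ≤ D y :=
    fun c hc y => step_bound hc₀ hC₀ hFb hc y
  have hIntStep : ∀ c : ℝ, 1 ≤ c →
      Integrable (fun y : Fin d → ℝ => F (fun i => (⌊c * y i⌋ : ℝ) / c)) := by
    intro c hc
    apply Integrable.mono' hDint (step_meas hFcont c).aestronglyMeasurable
    filter_upwards with y
    rw [Real.norm_eq_abs, abs_of_nonneg (hFnn _)]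
    exact hstepb c hc y
  have key : Tendsto (fun n : ℕ => ∫ y : Fin d → ℝ,
      F (fun i => (⌊Real.sqrt ((n:ℝ)+1) * y i⌋ : ℝ) / Real.sqrt ((n:ℝ)+1)))
      atTop (nhds (∫ y : Fin d → ℝ, F y)) := by
    apply tendsto_integral_of_dominated_convergence D
    · exact fun n => (step_meas hFcont _).aestronglyMeasurable
    · exact hDint
    · intro n
      filter_upwards with y
      rw [Real.norm_eq_abs, abs_of_nonneg (hFnn _)]
      refine hstepb _ ?_ y
      calc (1:ℝ) = Real.sqrt 1 := Real.sqrt_one.symm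
        _ ≤ _ := Real.sqrt_le_sqrt (by linarith [Nat.cast_nonneg (α := ℝ) n])
    · filter_upwards with y
      exact step_tendsto hFcont y
  have heq : ∀ n : ℕ, 1 ≤ n →
      (∑' w : Fin d → ℤ,
          |gauss ((n : ℝ) • Sig) (fun i => (w i : ℝ)) -
            gauss ((n : ℝ) • Sig') (fun i => (w i : ℝ))|)
        = ∫ y : Fin d → ℝ,
            F (fun i => (⌊Real.sqrt (n:ℝ) * y i⌋ : ℝ) / Real.sqrt (n:ℝ)) := by
    intro n hn
    have hn1 : (1:ℝ) ≤ (n:ℝ) := by exact_mod_cast hn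
    have hcpos : 0 < Real.sqrt (n:ℝ) := Real.sqrt_pos.mpr (by linarith)
    rw [← riemann_eq F hFcont hcpos (hIntStep _ (by
      calc (1:ℝ) = Real.sqrt 1 := Real.sqrt_one.symm
        _ ≤ _ := Real.sqrt_le_sqrt hn1))]
    apply tsum_congr
    intro w
    rw [gauss_scale hp hn, gauss_scale hp' hn, ← mul_sub, abs_mul,
      abs_of_nonneg (by positivity : (0:ℝ) ≤ ((Real.sqrt (n:ℝ))⁻¹)^d)]
    have harg : ((Real.sqrt (n:ℝ))⁻¹ • fun i => (w i : ℝ))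
        = fun i => (w i : ℝ) / Real.sqrt (n:ℝ) := by
      funext i
      simp [div_eq_inv_mul]
    rw [harg]
  rw [← tendsto_add_atTop_iff_nat 1]
  apply key.congr
  intro n
  have hcast : ((n:ℝ)+1) = ((n+1 : ℕ) : ℝ) := by push_cast; ring
  rw [hcast]
  exact (heq (n+1) (by omega)).symm

end NSVA
end
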